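/- arXiv:1805.10137 — 4 statements merged into one kernel-verified Lean document; each statement's English description precedes it below -/
import Mathlib

section
/- Let (gⁿ)_{n∈ℕ} be a sequence of nonnegative functions on (0,∞) with ∫₀^∞ (1+z) gⁿ(z) dz ≤ G for all n and some constant G > 0, and suppose gⁿ ⇀ g weakly in L¹(0,∞) for some g ∈ S⁺. Then for every a > 0, the truncated coagulation gain terms converge weakly: C₁ⁿ(gⁿ) ⇀ C₁(g) in L¹((0,a)) as n → ∞, where C₁ⁿ(gⁿ)(z) = ½∫₀^z E(z−z₁,z₁)Φₙ(z−z₁,z₁)gⁿ(z−z₁)gⁿ(z₁) dz₁ and C₁(g)(z) = ½∫₀^z E(z−z₁,z₁)Φ(z−z₁,z₁)g(z−z₁)g(z₁) dz₁. -/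
open MeasureTheory Set Filter

noncomputable section

/-- The collision kernel `Φ(z,z₁) = k₁ (z^α z₁^β + z₁^α z^β)`. -/
def Phi (k₁ α β : ℝ) (z z₁ : ℝ) : ℝ := k₁ * (z ^ α * z₁ ^ β + z₁ ^ α * z ^ β)

/-- The truncated kernel `Φₙ(z,z₁) = Φ(z,z₁) χ_{(0,n)}(z+z₁)`. -/
def PhiN (k₁ α β n : ℝ) (z z₁ : ℝ) : ℝ :=
  (Ioo (0:ℝ) n).indicator (fun _ => (1:ℝ)) (z + z₁) * Phi k₁ α β z z₁

/-- Coagulation gain term `C₁(g)`. -/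
def C1 (E Φ : ℝ → ℝ → ℝ) (g : ℝ → ℝ) (z : ℝ) : ℝ :=
  (1 / 2) * ∫ z₁ in Ioo (0:ℝ) z, E (z - z₁) z₁ * Φ (z - z₁) z₁ * g (z - z₁) * g z₁

/-- Collision loss term `B₃(g)`. -/
def B3 (Φ : ℝ → ℝ → ℝ) (g : ℝ → ℝ) (z : ℝ) : ℝ :=
  ∫ z₁ in Ioi (0:ℝ), Φ z z₁ * g z * g z₁

/-- Collisional breakage gain term `B₁(g)`. -/
def B1 (P : ℝ → ℝ → ℝ → ℝ) (E Φ : ℝ → ℝ → ℝ) (g : ℝ → ℝ) (z : ℝ) : ℝ :=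
  (1 / 2) * ∫ z₁ in Ioi z, ∫ z₂ in Ioo (0:ℝ) z₁,
    P z (z₁ - z₂) z₂ * (1 - E (z₁ - z₂) z₂) * Φ (z₁ - z₂) z₂ * g (z₁ - z₂) * g z₂

/-- Truncated collision loss term `B₃ⁿ(g)`. -/
def B3n (Φ : ℝ → ℝ → ℝ) (n : ℝ) (g : ℝ → ℝ) (z : ℝ) : ℝ :=
  ∫ z₁ in Ioo (0:ℝ) (n - z), Φ z z₁ * g z * g z₁

/-- Truncated collisional breakage gain term `B₁ⁿ(g)`. -/
def B1n (P : ℝ → ℝ → ℝ → ℝ) (E Φ : ℝ → ℝ → ℝ) (n : ℝ) (g : ℝ → ℝ) (z : ℝ) : ℝ :=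
  (1 / 2) * ∫ z₁ in Ioo z n, ∫ z₂ in Ioo (0:ℝ) z₁,
    P z (z₁ - z₂) z₂ * (1 - E (z₁ - z₂) z₂) * Φ (z₁ - z₂) z₂ * g (z₁ - z₂) * g z₂

/-- Membership in the space `S⁺`: nonnegative and integrable against `(1+z)dz` on `(0,∞)`. -/
def MemSplus (g : ℝ → ℝ) : Prop :=
  (∀ z, 0 ≤ g z) ∧ IntegrableOn (fun z => (1 + z) * g z) (Ioi 0) volume

/-- `g` is the nonnegative mass-conserving solution of the `n`-truncated
coagulation–collisional breakage system on `[0,T]`, extended by zero for `z ≥ n`. -/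
def IsTruncSol (k₁ α β : ℝ) (E : ℝ → ℝ → ℝ) (P : ℝ → ℝ → ℝ → ℝ)
    (T : ℝ) (g₀ : ℝ → ℝ) (n : ℕ) (g : ℝ → ℝ → ℝ) : Prop :=
  (∀ z t, 0 ≤ g z t) ∧
  (∀ z t, (n : ℝ) ≤ z → g z t = 0) ∧
  (∀ t ∈ Icc (0:ℝ) T, IntegrableOn (fun z => (1 + z) * g z t) (Ioi 0) volume) ∧
  (∀ z ∈ Ioo (0:ℝ) (n : ℝ), ∀ t ∈ Icc (0:ℝ) T,
    g z t = g₀ z + ∫ s in (0:ℝ)..t,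
      (C1 E (PhiN k₁ α β (n : ℝ)) (fun y => g y s) z
        - B3n (PhiN k₁ α β (n : ℝ)) (n : ℝ) (fun y => g y s) z
        + B1n P E (PhiN k₁ α β (n : ℝ)) (n : ℝ) (fun y => g y s) z)) ∧
  (∀ t ∈ Icc (0:ℝ) T, ∫ z in Ioo (0:ℝ) (n : ℝ), z * g z t = ∫ z in Ioo (0:ℝ) (n : ℝ), z * g₀ z)

/-- The power-law fragment distribution `P_ν`. -/
def Pnu (ν : ℝ) (z z₁ z₂ : ℝ) : ℝ :=
  if 0 < z ∧ z < z₁ + z₂ then (ν + 2) * z ^ ν / (z₁ + z₂) ^ (ν + 1) else 0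


/-! ### Auxiliary machinery for the proof -/

section AuxMachinery

/-- The auxiliary kernel with all domain indicators built in. -/
def Ker (k₁ α β a : ℝ) (E : ℝ → ℝ → ℝ) (ψ : ℝ → ℝ) (x y : ℝ) : ℝ :=
  (Ioo (0:ℝ) a).indicator (fun _ => (1:ℝ)) (x + y) *
    ((Ioi (0:ℝ)).indicator (fun _ => (1:ℝ)) x *
      ((Ioi (0:ℝ)).indicator (fun _ => (1:ℝ)) y *
        (E x y * (Phi k₁ α β x y * ψ (x + y)))))

lemma ker_measurable {k₁ α β a : ℝ} {E : ℝ → ℝ → ℝ} {ψ : ℝ → ℝ}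
    (hE : Measurable (Function.uncurry E)) (hψ : Measurable ψ) :
    Measurable (fun p : ℝ × ℝ => Ker k₁ α β a E ψ p.1 p.2) := by
  unfold Ker Phi
  have h1 : Measurable fun p : ℝ × ℝ => p.1 + p.2 := by fun_prop
  have hind : Measurable ((Ioo (0:ℝ) a).indicator (fun _ => (1:ℝ))) :=
    measurable_const.indicator measurableSet_Ioo
  have hind2 : Measurable ((Ioi (0:ℝ)).indicator (fun _ => (1:ℝ))) :=
    measurable_const.indicator measurableSet_Ioi
  have hErw : Measurable fun p : ℝ × ℝ => E p.1 p.2 := hE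
  fun_prop

lemma ker_bound {k₁ α β a C : ℝ} {E : ℝ → ℝ → ℝ} {ψ : ℝ → ℝ}
    (hk₁ : 0 ≤ k₁) (hα : 0 < α) (hαβ : α ≤ β)
    (hEnn : ∀ z z₁, 0 ≤ E z z₁) (hEle : ∀ z z₁, E z z₁ ≤ 1)
    (hC : ∀ z, |ψ z| ≤ C) :
    ∀ x y, |Ker k₁ α β a E ψ x y| ≤
      C * (k₁ * (2 * (max 1 a ^ α * max 1 a ^ β))) := by
  intro x y
  have hC0 : 0 ≤ C := (abs_nonneg _).trans (hC 0)
  have hc1 : (1:ℝ) ≤ max 1 a := le_max_left _ _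
  have hc0 : (0:ℝ) < max 1 a := lt_of_lt_of_le one_pos hc1
  have hβ0 : 0 < β := lt_of_lt_of_le hα hαβ
  have hrw : (0:ℝ) ≤ max 1 a ^ α * max 1 a ^ β :=
    mul_nonneg (Real.rpow_nonneg hc0.le _) (Real.rpow_nonneg hc0.le _)
  have hM0 : 0 ≤ C * (k₁ * (2 * (max 1 a ^ α * max 1 a ^ β))) := by positivity
  unfold Ker
  by_cases hxy : x + y ∈ Ioo (0:ℝ) a
  case neg => simp [Set.indicator_of_notMem hxy, hM0]
  by_cases hx : x ∈ Ioi (0:ℝ)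
  case neg => simp [Set.indicator_of_notMem hx, hM0]
  by_cases hy : y ∈ Ioi (0:ℝ)
  case neg => simp [Set.indicator_of_notMem hy, hM0]
  rw [Set.indicator_of_mem hxy, Set.indicator_of_mem hx, Set.indicator_of_mem hy]
  simp only [one_mul]
  have hx0 : (0:ℝ) < x := hx
  have hy0 : (0:ℝ) < y := hy
  have hxa : x ≤ max 1 a := le_trans (by linarith [hxy.2] : x ≤ a) (le_max_right _ _)
  have hya : y ≤ max 1 a := le_trans (by linarith [hxy.2] : y ≤ a) (le_max_right _ _)
  have hPhi_nn : 0 ≤ Phi k₁ α β x y := by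
    unfold Phi
    have := Real.rpow_nonneg hx0.le α
    have := Real.rpow_nonneg hy0.le β
    have := Real.rpow_nonneg hy0.le α
    have := Real.rpow_nonneg hx0.le β
    positivity
  have hPhi_le : Phi k₁ α β x y ≤ k₁ * (2 * (max 1 a ^ α * max 1 a ^ β)) := by
    unfold Phi
    have h1 : x ^ α * y ^ β ≤ max 1 a ^ α * max 1 a ^ β :=
      mul_le_mul (Real.rpow_le_rpow hx0.le hxa hα.le)
        (Real.rpow_le_rpow hy0.le hya hβ0.le) (Real.rpow_nonneg hy0.le _)
        (Real.rpow_nonneg hc0.le _)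
    have h2 : y ^ α * x ^ β ≤ max 1 a ^ α * max 1 a ^ β :=
      mul_le_mul (Real.rpow_le_rpow hy0.le hya hα.le)
        (Real.rpow_le_rpow hx0.le hxa hβ0.le) (Real.rpow_nonneg hx0.le _)
        (Real.rpow_nonneg hc0.le _)
    nlinarith
  have hE01 : |E x y| ≤ 1 := by
    rw [abs_le]; exact ⟨by linarith [hEnn x y], hEle x y⟩
  calc |E x y * (Phi k₁ α β x y * ψ (x + y))|
      = |E x y| * (|Phi k₁ α β x y| * |ψ (x + y)|) := by rw [abs_mul, abs_mul]
    _ ≤ 1 * ((k₁ * (2 * (max 1 a ^ α * max 1 a ^ β))) * C) := by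
        apply mul_le_mul hE01 _ (by positivity) one_pos.le
        apply mul_le_mul _ (hC _) (abs_nonneg _) (by positivity)
        rwa [abs_of_nonneg hPhi_nn]
    _ = C * (k₁ * (2 * (max 1 a ^ α * max 1 a ^ β))) := by ring

/-- The measure-preserving shear `(x, y) ↦ (x, x + y)` on `ℝ × ℝ`. -/
def shearEquiv : ℝ × ℝ ≃ᵐ ℝ × ℝ :=
{ toFun := fun p => (p.1, p.1 + p.2),
  invFun := fun p => (p.1, p.2 - p.1),
  left_inv := fun p => by simp,
  right_inv := fun p => by simp,
  measurable_toFun := measurable_fst.prodMk (measurable_fst.add measurable_snd),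
  measurable_invFun := measurable_fst.prodMk (measurable_snd.sub measurable_fst) }

lemma shearEquiv_apply (p : ℝ × ℝ) : shearEquiv p = (p.1, p.1 + p.2) := rfl

lemma shear_measurePreserving :
    MeasurePreserving (⇑shearEquiv) ((volume : Measure ℝ).prod volume)
      ((volume : Measure ℝ).prod volume) :=
  measurePreserving_prod_add volume volume

lemma setIntegral_eq_integral_of_ne {f : ℝ → ℝ} {s : Set ℝ} (hs : MeasurableSet s)
    (h0 : ∀ x, x ∉ s → f x = 0) : ∫ x in s, f x = ∫ x, f x := by
  rw [← integral_indicator hs]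
  congr 1; funext x
  by_cases hx : x ∈ s
  · simp [indicator_of_mem hx]
  · simp [indicator_of_notMem hx, h0 x hx]

/-- Master identity: the weighted integral of the gain term as a bilinear form. -/
lemma master_identity {k₁ α β a C : ℝ} {E : ℝ → ℝ → ℝ} {ψ : ℝ → ℝ} {h : ℝ → ℝ}
    (hKb : ∀ x y, |Ker k₁ α β a E ψ x y| ≤ C)
    (hKmeas : Measurable fun p : ℝ × ℝ => Ker k₁ α β a E ψ p.1 p.2)
    (hmeas : Measurable h) (hnn : ∀ z, 0 ≤ h z) (hsupp : ∀ z, z ≤ 0 → h z = 0)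
    (hint : Integrable h volume) :
    ∫ y in Ioi (0:ℝ), h y * ∫ x in Ioi (0:ℝ), h x * Ker k₁ α β a E ψ x y
      = 2 * ∫ z in Ioo (0:ℝ) a, C1 E (Phi k₁ α β) h z * ψ z := by
  set K := Ker k₁ α β a E ψ with hK
  set Θ : ℝ × ℝ → ℝ := fun p => h p.1 * (h p.2 * K p.2 p.1) with hΘ
  set Λ : ℝ × ℝ → ℝ := fun q => h q.1 * (h (q.2 - q.1) * K (q.2 - q.1) q.1) with hΛ
  have hΘm : Measurable Θ :=
    (hmeas.comp measurable_fst).mul ((hmeas.comp measurable_snd).mul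
      (hKmeas.comp (measurable_snd.prodMk measurable_fst)))
  have hΘint : Integrable Θ ((volume : Measure ℝ).prod volume) := by
    apply Integrable.mono' (g := fun p : ℝ × ℝ => h p.1 * (C * h p.2))
      (Integrable.mul_prod hint (hint.const_mul C)) hΘm.aestronglyMeasurable
    apply Eventually.of_forall; intro p
    rw [Real.norm_eq_abs, hΘ]
    simp only []
    rw [abs_mul, abs_mul, abs_of_nonneg (hnn p.1), abs_of_nonneg (hnn p.2)]
    calc h p.1 * (h p.2 * |K p.2 p.1|) ≤ h p.1 * (h p.2 * C) :=
          mul_le_mul_of_nonneg_left (mul_le_mul_of_nonneg_left (hKb _ _) (hnn _)) (hnn _)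
      _ = h p.1 * (C * h p.2) := by ring
  have hcomp : Λ ∘ ⇑shearEquiv = Θ := by
    funext q
    simp only [Function.comp_apply, shearEquiv_apply, hΛ, hΘ, add_sub_cancel_left]
  have hΛint : Integrable Λ ((volume : Measure ℝ).prod volume) :=
    (shear_measurePreserving.integrable_comp_emb shearEquiv.measurableEmbedding).mp
      (by rw [hcomp]; exact hΘint)
  have hinner : ∀ y, (∫ x in Ioi (0:ℝ), h x * K x y) = ∫ x, h x * K x y := by
    intro y
    exact setIntegral_eq_integral_of_ne measurableSet_Ioi
      (fun x hx => by rw [hsupp x (le_of_not_gt (by simpa using hx))]; ring)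
  have step1 : (∫ y in Ioi (0:ℝ), h y * ∫ x in Ioi (0:ℝ), h x * K x y)
      = ∫ y, h y * ∫ x, h x * K x y := by
    simp_rw [hinner]
    exact setIntegral_eq_integral_of_ne measurableSet_Ioi
      (fun y hy => by rw [hsupp y (le_of_not_gt (by simpa using hy))]; ring)
  have step2 : (∫ y, h y * ∫ x, h x * K x y)
      = ∫ p, Θ p ∂((volume : Measure ℝ).prod volume) := by
    rw [integral_prod Θ hΘint]
    simp_rw [hΘ]
    simp_rw [integral_const_mul]
  have step3 : (∫ p, Θ p ∂((volume : Measure ℝ).prod volume))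
      = ∫ q, Λ q ∂((volume : Measure ℝ).prod volume) := by
    rw [← hcomp]
    exact (shear_measurePreserving.integral_comp shearEquiv.measurableEmbedding Λ)
  have step4 : (∫ q, Λ q ∂((volume : Measure ℝ).prod volume))
      = ∫ z, ∫ y, Λ (y, z) := integral_prod_symm Λ hΛint
  have step5 : ∀ z : ℝ, (∫ y, Λ (y, z))
      = (Ioo (0:ℝ) a).indicator (fun z' => 2 * (C1 E (Phi k₁ α β) h z' * ψ z')) z := by
    intro z
    by_cases hz : z ∈ Ioo (0:ℝ) a
    · rw [indicator_of_mem hz]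
      have hrw : ∀ y, Λ (y, z) = (Ioo (0:ℝ) z).indicator
          (fun y => E (z - y) y * Phi k₁ α β (z - y) y * h (z - y) * h y * ψ z) y := by
        intro y
        simp only [hΛ, hK]
        unfold Ker
        rw [sub_add_cancel]
        by_cases hy : y ∈ Ioo (0:ℝ) z
        · rw [indicator_of_mem hy, indicator_of_mem hz,
            indicator_of_mem (mem_Ioi.mpr (sub_pos.mpr hy.2)),
            indicator_of_mem (mem_Ioi.mpr hy.1)]
          ring
        · rw [indicator_of_notMem hy]
          rcases not_and_or.mp hy with hy1 | hy2
          · rw [indicator_of_notMem (by simpa using hy1 : y ∉ Ioi (0:ℝ))]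
            ring
          · have : z - y ∉ Ioi (0:ℝ) := by
              simp only [mem_Ioi, sub_pos]
              exact fun hc => hy2 hc
            rw [indicator_of_notMem this]
            ring
      simp_rw [hrw]
      rw [integral_indicator measurableSet_Ioo, integral_mul_const, C1]
      ring
    · rw [indicator_of_notMem hz]
      have hrw : ∀ y, Λ (y, z) = 0 := by
        intro y
        simp only [hΛ, hK]
        unfold Ker
        rw [sub_add_cancel, indicator_of_notMem hz]
        ring
      simp_rw [hrw, integral_zero]
  have step6 : (∫ z, ∫ y, Λ (y, z))
      = 2 * ∫ z in Ioo (0:ℝ) a, C1 E (Phi k₁ α β) h z * ψ z := by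
    simp_rw [step5]
    rw [integral_indicator measurableSet_Ioo, integral_const_mul]
  rw [step1, step2, step3, step4, step6]

lemma abs_int_le {X : Type*} [MeasurableSpace X] {f : X → ℝ} {μ : MeasureTheory.Measure X} :
    |∫ x, f x ∂μ| ≤ ∫ x, |f x| ∂μ := by
  simpa [Real.norm_eq_abs] using norm_integral_le_integral_norm (μ := μ) f

lemma aux_int {h φ : ℝ → ℝ} {M : ℝ}
    (hint : IntegrableOn h (Ioi (0:ℝ))) (hφ : Measurable φ) (hb : ∀ x, |φ x| ≤ M) :
    IntegrableOn (fun x => h x * φ x) (Ioi (0:ℝ)) :=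
  Integrable.bdd_mul (c := M) hint hφ.aestronglyMeasurable.restrict
    (Eventually.of_forall fun x => by simpa [Real.norm_eq_abs] using hb x) |>.congr
    (Eventually.of_forall fun x => mul_comm _ _)

lemma aux_abs_le {h φ : ℝ → ℝ} {M B : ℝ} (hM : 0 ≤ M) (hnn : ∀ x, 0 ≤ h x)
    (hint : IntegrableOn h (Ioi (0:ℝ))) (hφ : Measurable φ) (hb : ∀ x, |φ x| ≤ M)
    (hB : (∫ x in Ioi (0:ℝ), h x) ≤ B) :
    |∫ x in Ioi (0:ℝ), h x * φ x| ≤ M * B := by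
  have h1 : |∫ x in Ioi (0:ℝ), h x * φ x| ≤ ∫ x in Ioi (0:ℝ), |h x * φ x| := abs_int_le
  have h2 : (∫ x in Ioi (0:ℝ), |h x * φ x|) ≤ ∫ x in Ioi (0:ℝ), M * h x := by
    apply setIntegral_mono_on (aux_int hint hφ hb).abs (hint.const_mul M) measurableSet_Ioi
    intro x _
    rw [abs_mul, abs_of_nonneg (hnn x)]
    calc h x * |φ x| ≤ h x * M := mul_le_mul_of_nonneg_left (hb x) (hnn x)
      _ = M * h x := mul_comm _ _
  rw [integral_const_mul] at h2
  calc |∫ x in Ioi (0:ℝ), h x * φ x| ≤ M * ∫ x in Ioi (0:ℝ), h x := h1.trans h2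
    _ ≤ M * B := mul_le_mul_of_nonneg_left hB hM

/-- The key weak-convergence argument for quadratic functionals. -/
lemma weak_quadratic_limit {K : ℝ → ℝ → ℝ} {M G Gg : ℝ} {g : ℕ → ℝ → ℝ} {gl : ℝ → ℝ}
    (hM : 0 ≤ M) (hG : 0 ≤ G) (hGg : 0 ≤ Gg)
    (hKmeas : Measurable fun p : ℝ × ℝ => K p.1 p.2)
    (hKb : ∀ x y, |K x y| ≤ M)
    (hgmeas : ∀ n, Measurable (g n)) (hgnn : ∀ n z, 0 ≤ g n z)
    (hgint : ∀ n, IntegrableOn (g n) (Ioi (0:ℝ)))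
    (hgG : ∀ n, (∫ z in Ioi (0:ℝ), g n z) ≤ G)
    (hlmeas : Measurable gl) (hlnn : ∀ z, 0 ≤ gl z)
    (hlint : IntegrableOn gl (Ioi (0:ℝ)))
    (hlG : (∫ z in Ioi (0:ℝ), gl z) ≤ Gg)
    (hweak : ∀ φ : ℝ → ℝ, Measurable φ → (∃ C, ∀ z, |φ z| ≤ C) →
      Tendsto (fun n => ∫ z in Ioi (0:ℝ), g n z * φ z) atTop
        (nhds (∫ z in Ioi (0:ℝ), gl z * φ z))) :
    Tendsto (fun n => ∫ y in Ioi (0:ℝ), g n y * ∫ x in Ioi (0:ℝ), g n x * K x y) atTop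
      (nhds (∫ y in Ioi (0:ℝ), gl y * ∫ x in Ioi (0:ℝ), gl x * K x y)) := by
  set Wn : ℕ → ℝ → ℝ := fun n y => ∫ x in Ioi (0:ℝ), g n x * K x y with hWn
  set Wl : ℝ → ℝ := fun y => ∫ x in Ioi (0:ℝ), gl x * K x y with hWl
  have hKy : ∀ y, Measurable fun x => K x y := fun y =>
    hKmeas.comp (measurable_id.prodMk measurable_const)
  have hWn_meas : ∀ n, Measurable (Wn n) := by
    intro n
    have : StronglyMeasurable fun p : ℝ × ℝ => g n p.1 * K p.1 p.2 :=
      (((hgmeas n).comp measurable_fst).mul hKmeas).stronglyMeasurable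
    exact this.integral_prod_left'.measurable
  have hWl_meas : Measurable Wl := by
    have : StronglyMeasurable fun p : ℝ × ℝ => gl p.1 * K p.1 p.2 :=
      ((hlmeas.comp measurable_fst).mul hKmeas).stronglyMeasurable
    exact this.integral_prod_left'.measurable
  have hWn_bd : ∀ n y, |Wn n y| ≤ M * G := fun n y =>
    aux_abs_le hM (hgnn n) (hgint n) (hKy y) (fun x => hKb x y) (hgG n)
  have hWl_bd : ∀ y, |Wl y| ≤ M * Gg := fun y =>
    aux_abs_le hM hlnn hlint (hKy y) (fun x => hKb x y) hlG
  have hWpt : ∀ y, Tendsto (fun n => Wn n y) atTop (nhds (Wl y)) := fun y =>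
    hweak (fun x => K x y) (hKy y) ⟨M, fun x => hKb x y⟩
  set M2 : ℝ := M * G + M * Gg with hM2
  have hM2nn : 0 ≤ M2 := by positivity
  set Φ : ℕ → ℝ → ℝ := fun N y => ⨆ m : ℕ, |Wn (N + m) y - Wl y| with hΦ
  have hbdd : ∀ N y, BddAbove (range fun m : ℕ => |Wn (N + m) y - Wl y|) := by
    intro N y
    refine ⟨M2, ?_⟩
    rintro _ ⟨m, rfl⟩
    calc |Wn (N + m) y - Wl y| ≤ |Wn (N + m) y| + |Wl y| := abs_sub _ _
      _ ≤ M * G + M * Gg := add_le_add (hWn_bd _ _) (hWl_bd _)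
  have hΦmeas : ∀ N, Measurable (Φ N) := fun N =>
    Measurable.iSup fun m => ((hWn_meas (N + m)).sub hWl_meas).abs
  have hΦle : ∀ N y, Φ N y ≤ M2 := fun N y =>
    ciSup_le fun m => by
      calc |Wn (N + m) y - Wl y| ≤ |Wn (N + m) y| + |Wl y| := abs_sub _ _
        _ ≤ M * G + M * Gg := add_le_add (hWn_bd _ _) (hWl_bd _)
  have hΦnn : ∀ N y, 0 ≤ Φ N y := fun N y =>
    (abs_nonneg _).trans (le_ciSup (hbdd N y) 0)
  have hΦge : ∀ N n, N ≤ n → ∀ y, |Wn n y - Wl y| ≤ Φ N y := by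
    intro N n hn y
    have := le_ciSup (hbdd N y) (n - N)
    rwa [Nat.add_sub_cancel' hn] at this
  have hΦt0 : ∀ y, Tendsto (fun N => Φ N y) atTop (nhds 0) := by
    intro y
    rw [Metric.tendsto_atTop]
    intro ε hε
    obtain ⟨N₀, hN₀⟩ := Metric.tendsto_atTop.mp (hWpt y) (ε / 2) (by linarith)
    refine ⟨N₀, fun N hN => ?_⟩
    rw [Real.dist_eq, sub_zero, abs_of_nonneg (hΦnn N y)]
    have : Φ N y ≤ ε / 2 := ciSup_le fun m => by
      have := hN₀ (N + m) (le_trans hN (Nat.le_add_right _ _))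
      rw [Real.dist_eq] at this
      exact this.le
    linarith
  have hΦint_lim : Tendsto (fun N => ∫ y in Ioi (0:ℝ), gl y * Φ N y) atTop (nhds 0) := by
    have key : Tendsto (fun N => ∫ y in Ioi (0:ℝ), gl y * Φ N y) atTop
        (nhds (∫ _ in Ioi (0:ℝ), (0:ℝ))) := by
      apply tendsto_integral_of_dominated_convergence (bound := fun y => M2 * gl y)
      · exact fun N => (hlmeas.mul (hΦmeas N)).aestronglyMeasurable.restrict
      · exact hlint.const_mul M2
      · intro N
        apply Eventually.of_forall
        intro y
        rw [Real.norm_eq_abs, abs_mul, abs_of_nonneg (hlnn y), abs_of_nonneg (hΦnn N y)]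
        calc gl y * Φ N y ≤ gl y * M2 := mul_le_mul_of_nonneg_left (hΦle N y) (hlnn y)
          _ = M2 * gl y := mul_comm _ _
      · apply Eventually.of_forall
        intro y
        have := (hΦt0 y).const_mul (gl y)
        simpa using this
    simpa using key
  rw [Metric.tendsto_atTop]
  intro ε hε
  obtain ⟨N₀, hN₀⟩ := Metric.tendsto_atTop.mp hΦint_lim (ε / 4) (by linarith)
  have hglΦ : (∫ y in Ioi (0:ℝ), gl y * Φ N₀ y) < ε / 4 := by
    have := hN₀ N₀ le_rfl
    rw [Real.dist_eq, sub_zero] at this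
    exact lt_of_le_of_lt (le_abs_self _) this
  obtain ⟨N₁, hN₁⟩ := Metric.tendsto_atTop.mp
    (hweak (Φ N₀) (hΦmeas N₀) ⟨M2, fun y => by rw [abs_of_nonneg (hΦnn N₀ y)]; exact hΦle N₀ y⟩)
    (ε / 4) (by linarith)
  obtain ⟨N₂, hN₂⟩ := Metric.tendsto_atTop.mp
    (hweak Wl hWl_meas ⟨M * Gg, hWl_bd⟩) (ε / 4) (by linarith)
  refine ⟨max (max N₀ N₁) N₂, fun n hn => ?_⟩
  have hnN₀ : N₀ ≤ n := le_trans (le_trans (le_max_left _ _) (le_max_left _ _)) hn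
  have hnN₁ : N₁ ≤ n := le_trans (le_trans (le_max_right _ _) (le_max_left _ _)) hn
  have hnN₂ : N₂ ≤ n := le_trans (le_max_right _ _) hn
  have hint_nn : IntegrableOn (fun y => g n y * Wn n y) (Ioi (0:ℝ)) :=
    aux_int (hgint n) (hWn_meas n) (fun y => hWn_bd n y)
  have hint_nl : IntegrableOn (fun y => g n y * Wl y) (Ioi (0:ℝ)) :=
    aux_int (hgint n) hWl_meas hWl_bd
  have hint_nΦ : IntegrableOn (fun y => g n y * Φ N₀ y) (Ioi (0:ℝ)) :=
    aux_int (hgint n) (hΦmeas N₀)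
      (fun y => by rw [abs_of_nonneg (hΦnn N₀ y)]; exact hΦle N₀ y)
  have key1 : |(∫ y in Ioi (0:ℝ), g n y * Wn n y) - ∫ y in Ioi (0:ℝ), g n y * Wl y|
      ≤ ∫ y in Ioi (0:ℝ), g n y * Φ N₀ y := by
    rw [← integral_sub hint_nn hint_nl]
    calc |∫ y in Ioi (0:ℝ), (g n y * Wn n y - g n y * Wl y)|
        ≤ ∫ y in Ioi (0:ℝ), |g n y * Wn n y - g n y * Wl y| := abs_int_le
      _ ≤ ∫ y in Ioi (0:ℝ), g n y * Φ N₀ y := by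
          apply setIntegral_mono_on _ hint_nΦ measurableSet_Ioi
          · intro y _
            rw [← mul_sub, abs_mul, abs_of_nonneg (hgnn n y)]
            exact mul_le_mul_of_nonneg_left (hΦge N₀ n hnN₀ y) (hgnn n y)
          · apply Integrable.abs
            exact hint_nn.sub hint_nl
  have key2 : (∫ y in Ioi (0:ℝ), g n y * Φ N₀ y) < ε / 2 := by
    have h1 := hN₁ n hnN₁
    rw [Real.dist_eq] at h1
    have h2 := abs_lt.mp h1
    linarith [h2.2]
  have key3 : |(∫ y in Ioi (0:ℝ), g n y * Wl y) - ∫ y in Ioi (0:ℝ), gl y * Wl y| < ε / 4 := by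
    have := hN₂ n hnN₂
    rwa [Real.dist_eq] at this
  rw [Real.dist_eq]
  calc |(∫ y in Ioi (0:ℝ), g n y * Wn n y) - ∫ y in Ioi (0:ℝ), gl y * Wl y|
      ≤ |(∫ y in Ioi (0:ℝ), g n y * Wn n y) - ∫ y in Ioi (0:ℝ), g n y * Wl y|
        + |(∫ y in Ioi (0:ℝ), g n y * Wl y) - ∫ y in Ioi (0:ℝ), gl y * Wl y| :=
        abs_sub_le _ _ _
    _ < ε := by
        have := key1.trans_lt key2
        linarith

lemma int_of_weight {f : ℝ → ℝ} (hnn : ∀ z, 0 ≤ f z)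
    (hm : AEStronglyMeasurable f ((volume : Measure ℝ).restrict (Ioi 0)))
    (hw : IntegrableOn (fun z => (1 + z) * f z) (Ioi 0) volume) :
    IntegrableOn f (Ioi 0) volume := by
  apply Integrable.mono' hw hm
  filter_upwards [ae_restrict_mem measurableSet_Ioi] with z hz
  rw [Real.norm_eq_abs, abs_of_nonneg (hnn z)]
  nlinarith [hnn z, mem_Ioi.mp hz]

lemma int_le_weight {f : ℝ → ℝ} (hnn : ∀ z, 0 ≤ f z)
    (hf : IntegrableOn f (Ioi 0) volume)
    (hw : IntegrableOn (fun z => (1 + z) * f z) (Ioi 0) volume) :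
    (∫ z in Ioi (0:ℝ), f z) ≤ ∫ z in Ioi (0:ℝ), (1 + z) * f z := by
  apply setIntegral_mono_on hf hw measurableSet_Ioi
  intro z hz
  nlinarith [hnn z, mem_Ioi.mp hz]

end AuxMachinery

/-- Weak `L¹((0,a))` convergence of the truncated coagulation gain terms. -/
theorem C1n_weak_convergence
    (k₁ α β G : ℝ) (E : ℝ → ℝ → ℝ) (g : ℕ → ℝ → ℝ) (glim : ℝ → ℝ)
    (hk₁ : 0 ≤ k₁) (hα : 0 < α) (hαβ : α ≤ β) (hβ : β < 1) (hG : 0 < G)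
    (hEmeas : Measurable (Function.uncurry E))
    (hEsymm : ∀ z z₁, E z z₁ = E z₁ z)
    (hEnn : ∀ z z₁, 0 ≤ E z z₁) (hEle : ∀ z z₁, E z z₁ ≤ 1)
    (hgnn : ∀ n z, 0 ≤ g n z)
    (hgmeas : ∀ n, Measurable (g n))
    (hgint : ∀ n, IntegrableOn (fun z => (1 + z) * g n z) (Ioi 0) volume)
    (hgbd : ∀ n, (∫ z in Ioi (0:ℝ), (1 + z) * g n z) ≤ G)
    (hglim : MemSplus glim)
    (hweak : ∀ ψ : ℝ → ℝ, Measurable ψ → (∃ C, ∀ z, |ψ z| ≤ C) →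
      Tendsto (fun n => ∫ z in Ioi (0:ℝ), g n z * ψ z) atTop
        (nhds (∫ z in Ioi (0:ℝ), glim z * ψ z))) :
    ∀ a > (0:ℝ), ∀ ψ : ℝ → ℝ, Measurable ψ → (∃ C, ∀ z, |ψ z| ≤ C) →
      Tendsto (fun n : ℕ => ∫ z in Ioo (0:ℝ) a, C1 E (PhiN k₁ α β (n : ℝ)) (g n) z * ψ z)
        atTop (nhds (∫ z in Ioo (0:ℝ) a, C1 E (Phi k₁ α β) glim z * ψ z)) := by
  intro a ha ψ hψmeas hψbd
  obtain ⟨C, hC⟩ := hψbd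
  have hC0 : 0 ≤ C := (abs_nonneg _).trans (hC 0)
  set M : ℝ := C * (k₁ * (2 * (max 1 a ^ α * max 1 a ^ β))) with hMdef
  have hc0 : (0:ℝ) < max 1 a := lt_of_lt_of_le one_pos (le_max_left _ _)
  have hM0 : 0 ≤ M := by
    have h1 := Real.rpow_nonneg hc0.le α
    have h2 := Real.rpow_nonneg hc0.le β
    positivity
  set K : ℝ → ℝ → ℝ := Ker k₁ α β a E ψ with hKdef
  have hKb : ∀ x y, |K x y| ≤ M := ker_bound hk₁ hα hαβ hEnn hEle hC
  have hKm : Measurable fun p : ℝ × ℝ => K p.1 p.2 := ker_measurable hEmeas hψmeas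
  -- basic integrability of the sequence
  have hgint' : ∀ n, IntegrableOn (g n) (Ioi (0:ℝ)) volume := fun n =>
    int_of_weight (hgnn n) (hgmeas n).aestronglyMeasurable.restrict (hgint n)
  have hgG : ∀ n, (∫ z in Ioi (0:ℝ), g n z) ≤ G := fun n =>
    (int_le_weight (hgnn n) (hgint' n) (hgint n)).trans (hgbd n)
  -- measurable representative of the weak limit
  have hglm : AEStronglyMeasurable (fun z => (1 + z) * glim z)
      ((volume : Measure ℝ).restrict (Ioi 0)) := hglim.2.aestronglyMeasurable
  set u : ℝ → ℝ := hglm.mk _ with hudef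
  have hu_meas : StronglyMeasurable u := hglm.stronglyMeasurable_mk
  have hu_eq : (fun z => (1 + z) * glim z) =ᵐ[(volume : Measure ℝ).restrict (Ioi 0)] u :=
    hglm.ae_eq_mk
  set gl : ℝ → ℝ := (Ioi (0:ℝ)).indicator (fun x => max (u x / (1 + x)) 0) with hgldef
  have hgl_meas : Measurable gl :=
    ((hu_meas.measurable.div (measurable_const.add measurable_id)).max
      measurable_const).indicator measurableSet_Ioi
  have hgl_nn : ∀ z, 0 ≤ gl z := by
    intro z
    rw [hgldef]
    by_cases h : z ∈ Ioi (0:ℝ)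
    · rw [indicator_of_mem h]; exact le_max_right _ _
    · rw [indicator_of_notMem h]
  have hgl_supp : ∀ z, z ≤ 0 → gl z = 0 := by
    intro z hz
    rw [hgldef, indicator_of_notMem (by simpa using not_lt.mpr hz)]
  have hglim_ae : glim =ᵐ[(volume : Measure ℝ).restrict (Ioi 0)] gl := by
    filter_upwards [hu_eq, ae_restrict_mem measurableSet_Ioi] with z hz hmem
    have hz0 : (0:ℝ) < z := mem_Ioi.mp hmem
    have hz1 : (1:ℝ) + z ≠ 0 := by linarith
    rw [hgldef, indicator_of_mem hmem, ← hz, mul_comm, mul_div_assoc, div_self hz1, mul_one,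
      max_eq_left (hglim.1 z)]
  have hglint : IntegrableOn glim (Ioi 0) volume :=
    int_of_weight hglim.1 (hgl_meas.aestronglyMeasurable.restrict.congr hglim_ae.symm) hglim.2
  have hgl_int : IntegrableOn gl (Ioi 0) volume := hglint.congr hglim_ae
  set Gg : ℝ := ∫ z in Ioi (0:ℝ), gl z with hGgdef
  have hGg0 : 0 ≤ Gg := setIntegral_nonneg measurableSet_Ioi fun z _ => hgl_nn z
  -- transfer the weak convergence to gl
  have hweak' : ∀ φ : ℝ → ℝ, Measurable φ → (∃ C', ∀ z, |φ z| ≤ C') →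
      Tendsto (fun n => ∫ z in Ioi (0:ℝ), g n z * φ z) atTop
        (nhds (∫ z in Ioi (0:ℝ), gl z * φ z)) := by
    intro φ hφ hb
    have heq : (∫ z in Ioi (0:ℝ), glim z * φ z) = ∫ z in Ioi (0:ℝ), gl z * φ z := by
      apply integral_congr_ae
      filter_upwards [hglim_ae] with z hz
      rw [hz]
    exact heq ▸ hweak φ hφ hb
  -- main weak limit of the bilinear form
  have hmain := weak_quadratic_limit (K := K) hM0 hG.le hGg0 hKm hKb hgmeas hgnn
    hgint' hgG hgl_meas hgl_nn hgl_int le_rfl hweak'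
  -- identities for each n (n ≥ a)
  have hmaster_n : ∀ n : ℕ, a ≤ (n : ℝ) →
      (∫ z in Ioo (0:ℝ) a, C1 E (PhiN k₁ α β (n : ℝ)) (g n) z * ψ z)
        = (1 / 2) * ∫ y in Ioi (0:ℝ), g n y * ∫ x in Ioi (0:ℝ), g n x * K x y := by
    intro n hna
    set gtr : ℝ → ℝ := (Ioi (0:ℝ)).indicator (g n) with hgtrdef
    have htr_meas : Measurable gtr := (hgmeas n).indicator measurableSet_Ioi
    have htr_nn : ∀ z, 0 ≤ gtr z := by
      intro z
      rw [hgtrdef]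
      by_cases h : z ∈ Ioi (0:ℝ)
      · rw [indicator_of_mem h]; exact hgnn n z
      · rw [indicator_of_notMem h]
    have htr_supp : ∀ z, z ≤ 0 → gtr z = 0 := fun z hz => by
      rw [hgtrdef, indicator_of_notMem (by simpa using not_lt.mpr hz)]
    have htr_int : Integrable gtr volume := by
      rw [hgtrdef, integrable_indicator_iff measurableSet_Ioi]
      exact hgint' n
    have hmas := master_identity (a := a) hKb hKm htr_meas htr_nn htr_supp htr_int
    -- replace PhiN by Phi
    have step1 : (∫ z in Ioo (0:ℝ) a, C1 E (PhiN k₁ α β (n : ℝ)) (g n) z * ψ z)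
        = ∫ z in Ioo (0:ℝ) a, C1 E (Phi k₁ α β) (g n) z * ψ z := by
      apply setIntegral_congr_fun measurableSet_Ioo
      intro z hz
      have hzn : z ∈ Ioo (0:ℝ) (n : ℝ) := ⟨hz.1, lt_of_lt_of_le hz.2 hna⟩
      have : ∀ z₁ : ℝ, E (z - z₁) z₁ * PhiN k₁ α β (n : ℝ) (z - z₁) z₁ * g n (z - z₁) * g n z₁
          = E (z - z₁) z₁ * Phi k₁ α β (z - z₁) z₁ * g n (z - z₁) * g n z₁ := by
        intro z₁
        unfold PhiN
        rw [sub_add_cancel, indicator_of_mem hzn]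
        ring
      simp only [C1]
      rw [integral_congr_ae (Eventually.of_forall this)]
    -- replace g n by gtr inside C1
    have step2 : (∫ z in Ioo (0:ℝ) a, C1 E (Phi k₁ α β) (g n) z * ψ z)
        = ∫ z in Ioo (0:ℝ) a, C1 E (Phi k₁ α β) gtr z * ψ z := by
      apply setIntegral_congr_fun measurableSet_Ioo
      intro z hz
      simp only [C1]
      congr 1
      · congr 1
        apply setIntegral_congr_fun measurableSet_Ioo
        intro z₁ hz₁
        simp only [hgtrdef, indicator_of_mem (mem_Ioi.mpr (sub_pos.mpr hz₁.2)),
          indicator_of_mem (mem_Ioi.mpr hz₁.1)]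
    -- replace gtr by g n in the bilinear form
    have step3 : (∫ y in Ioi (0:ℝ), gtr y * ∫ x in Ioi (0:ℝ), gtr x * K x y)
        = ∫ y in Ioi (0:ℝ), g n y * ∫ x in Ioi (0:ℝ), g n x * K x y := by
      apply setIntegral_congr_fun measurableSet_Ioi
      intro y hy
      simp only [hgtrdef, indicator_of_mem hy]
      congr 1
      apply setIntegral_congr_fun measurableSet_Ioi
      intro x hx
      simp only [indicator_of_mem hx]
    rw [step1, step2, ← step3]
    rw [hmas]
    ring
  -- identity for the limit
  have hRHS : (∫ z in Ioo (0:ℝ) a, C1 E (Phi k₁ α β) glim z * ψ z)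
      = (1 / 2) * ∫ y in Ioi (0:ℝ), gl y * ∫ x in Ioi (0:ℝ), gl x * K x y := by
    have hglae : ∀ᵐ x ∂(volume : Measure ℝ), x ∈ Ioi (0:ℝ) → glim x = gl x :=
      (ae_restrict_iff' measurableSet_Ioi).mp hglim_ae
    have step0 : (∫ z in Ioo (0:ℝ) a, C1 E (Phi k₁ α β) glim z * ψ z)
        = ∫ z in Ioo (0:ℝ) a, C1 E (Phi k₁ α β) gl z * ψ z := by
      apply setIntegral_congr_fun measurableSet_Ioo
      intro z hz
      simp only [C1]
      congr 2
      apply integral_congr_ae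
      have hrefl : ∀ᵐ z₁ ∂(volume : Measure ℝ),
          z - z₁ ∈ Ioi (0:ℝ) → glim (z - z₁) = gl (z - z₁) :=
        (Measure.measurePreserving_sub_left (volume : Measure ℝ) z).quasiMeasurePreserving.ae hglae
      rw [EventuallyEq, ae_restrict_iff' measurableSet_Ioo]
      filter_upwards [hglae, hrefl] with z₁ h1 h2 hmem
      rw [h1 (mem_Ioi.mpr hmem.1), h2 (mem_Ioi.mpr (sub_pos.mpr hmem.2))]
    have hgl_full : Integrable gl volume := by
      rw [hgldef, integrable_indicator_iff measurableSet_Ioi]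
      apply hgl_int.congr
      filter_upwards [ae_restrict_mem measurableSet_Ioi] with x hx
      rw [hgldef, indicator_of_mem hx]
    have hmas := master_identity (a := a) hKb hKm hgl_meas hgl_nn hgl_supp hgl_full
    rw [step0, hmas]
    ring
  -- conclusion
  rw [hRHS]
  have hfin := hmain.const_mul (1 / 2 : ℝ)
  apply hfin.congr'
  rw [Filter.eventuallyEq_iff_exists_mem]
  refine ⟨{n | ⌈a⌉₊ ≤ n}, mem_atTop _, fun n hn => ?_⟩
  have hna : a ≤ (n : ℝ) := (Nat.le_ceil a).trans (Nat.cast_le.mpr hn)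
  exact ((hmaster_n n hna).trans (by ring)).symm
end
end

section
/- Let (gⁿ)_{n∈ℕ} be a sequence of nonnegative functions on (0,∞) with ∫₀^∞ (1+z) gⁿ(z) dz ≤ G for all n and some constant G > 0, and suppose gⁿ ⇀ g weakly in L¹(0,∞) for some g ∈ S⁺. Then for every a > 0, the truncated collision loss terms converge weakly: B₃ⁿ(gⁿ) ⇀ B₃(g) in L¹((0,a)) as n → ∞, where B₃ⁿ(gⁿ)(z) = ∫₀^{n−z} Φₙ(z,z₁)gⁿ(z)gⁿ(z₁) dz₁ and B₃(g)(z) = ∫₀^∞ Φ(z,z₁)g(z)g(z₁) dz₁. -/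
open MeasureTheory Set Filter

noncomputable section

namespace B3Aux

lemma rpow_le_one_add {z γ : ℝ} (hz : 0 < z) (hγ0 : 0 ≤ γ) (hγ1 : γ ≤ 1) :
    z ^ γ ≤ 1 + z := by
  rcases le_total z 1 with h | h
  · have h1 : z ^ γ ≤ 1 := Real.rpow_le_one hz.le h hγ0
    linarith
  · have h1 : z ^ γ ≤ z ^ (1:ℝ) := Real.rpow_le_rpow_of_exponent_le h hγ1
    rw [Real.rpow_one] at h1; linarith

lemma measurable_rpow_const (γ : ℝ) (hγ : 0 ≤ γ) : Measurable fun z : ℝ => z ^ γ :=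
  (Real.continuous_rpow_const hγ).measurable

lemma integrableOn_of_le {f h : ℝ → ℝ} {s : Set ℝ} (hs : MeasurableSet s)
    (hf : IntegrableOn f s volume)
    (hh : AEStronglyMeasurable h (volume.restrict s))
    {K : ℝ} (hb : ∀ z ∈ s, |h z| ≤ K * f z) :
    IntegrableOn h s volume := by
  refine Integrable.mono (hf.const_mul K) hh ?_
  refine (ae_restrict_iff' hs).2 (ae_of_all _ fun z hz => ?_)
  have h1 := hb z hz
  have h2 : K * f z ≤ |K * f z| := le_abs_self _
  simp only [Real.norm_eq_abs]
  exact h1.trans h2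

lemma integrableOn_g {g : ℝ → ℝ} (hg : ∀ z, 0 ≤ g z)
    (hgm : AEStronglyMeasurable g (volume.restrict (Ioi 0)))
    (hint : IntegrableOn (fun z => (1 + z) * g z) (Ioi 0) volume) :
    IntegrableOn g (Ioi 0) volume := by
  refine Integrable.mono hint hgm ?_
  refine (ae_restrict_iff' measurableSet_Ioi).2 (ae_of_all _ fun z hz => ?_)
  have hz0 : (0:ℝ) < z := hz
  have h1 : g z ≤ (1 + z) * g z := by nlinarith [hg z]
  have h2 : (1 + z) * g z ≤ |(1 + z) * g z| := le_abs_self _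
  simp only [Real.norm_eq_abs]
  rw [abs_of_nonneg (hg z)]
  exact h1.trans h2

lemma integrableOn_mul_rpow {g : ℝ → ℝ} (hg : ∀ z, 0 ≤ g z)
    (hgm : AEStronglyMeasurable g (volume.restrict (Ioi 0)))
    (hint : IntegrableOn (fun z => (1 + z) * g z) (Ioi 0) volume)
    {γ : ℝ} (hγ0 : 0 < γ) (hγ1 : γ ≤ 1) :
    IntegrableOn (fun z => g z * z ^ γ) (Ioi 0) volume := by
  refine Integrable.mono hint
    (hgm.mul (measurable_rpow_const γ hγ0.le).aestronglyMeasurable) ?_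
  refine (ae_restrict_iff' measurableSet_Ioi).2 (ae_of_all _ fun z hz => ?_)
  have hz0 : (0:ℝ) < z := hz
  have h1 : z ^ γ ≤ 1 + z := rpow_le_one_add hz0 hγ0.le hγ1
  have h0 : 0 ≤ z ^ γ := Real.rpow_nonneg hz0.le γ
  have h3 : g z * z ^ γ ≤ (1 + z) * g z := by nlinarith [hg z]
  have h2 : (1 + z) * g z ≤ |(1 + z) * g z| := le_abs_self _
  simp only [Real.norm_eq_abs]
  rw [abs_of_nonneg (mul_nonneg (hg z) h0)]
  exact h3.trans h2

lemma tail_bound {g : ℝ → ℝ} (hg : ∀ z, 0 ≤ g z)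
    (hgm : AEStronglyMeasurable g (volume.restrict (Ioi 0)))
    (hint : IntegrableOn (fun z => (1 + z) * g z) (Ioi 0) volume)
    {M : ℝ} (hM : (∫ z in Ioi (0:ℝ), (1 + z) * g z) ≤ M)
    {γ : ℝ} (hγ0 : 0 < γ) (hγ1 : γ ≤ 1)
    {R : ℝ} (hR : 1 ≤ R) :
    (∫ z in Ici R, g z * z ^ γ) ≤ R ^ (γ - 1) * M := by
  have hR0 : (0:ℝ) < R := lt_of_lt_of_le one_pos hR
  have hsub : Ici R ⊆ Ioi (0:ℝ) := fun x hx => lt_of_lt_of_le hR0 hx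
  have hint1 : IntegrableOn (fun z => g z * z ^ γ) (Ici R) volume :=
    (integrableOn_mul_rpow hg hgm hint hγ0 hγ1).mono_set hsub
  have hint2 : IntegrableOn (fun z => R ^ (γ - 1) * ((1 + z) * g z)) (Ici R) volume :=
    (hint.mono_set hsub).const_mul _
  have hRγ : 0 ≤ R ^ (γ - 1) := Real.rpow_nonneg hR0.le _
  have step1 : (∫ z in Ici R, g z * z ^ γ)
      ≤ ∫ z in Ici R, R ^ (γ - 1) * ((1 + z) * g z) := by
    refine setIntegral_mono_on hint1 hint2 measurableSet_Ici fun z hz => ?_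
    have hz1 : R ≤ z := hz
    have hz0 : (0:ℝ) < z := lt_of_lt_of_le hR0 hz1
    have e1 : z ^ (γ - 1) * z = z ^ γ := by
      rw [← Real.rpow_add_one hz0.ne' (γ - 1)]
      norm_num
    have e2 : z ^ (γ - 1) ≤ R ^ (γ - 1) :=
      Real.rpow_le_rpow_of_nonpos hR0 hz1 (by linarith)
    have e0 : 0 ≤ z ^ (γ - 1) := Real.rpow_nonneg hz0.le _
    calc g z * z ^ γ = z ^ (γ - 1) * z * g z := by rw [e1]; ring
      _ ≤ R ^ (γ - 1) * z * g z :=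
          mul_le_mul_of_nonneg_right (mul_le_mul_of_nonneg_right e2 hz0.le) (hg z)
      _ = R ^ (γ - 1) * (z * g z) := by ring
      _ ≤ R ^ (γ - 1) * ((1 + z) * g z) := by
          refine mul_le_mul_of_nonneg_left ?_ hRγ
          nlinarith [hg z]
  have step2 : (∫ z in Ici R, R ^ (γ - 1) * ((1 + z) * g z))
      = R ^ (γ - 1) * ∫ z in Ici R, (1 + z) * g z := integral_const_mul _ _
  have step3 : (∫ z in Ici R, (1 + z) * g z) ≤ ∫ z in Ioi (0:ℝ), (1 + z) * g z := by
    refine setIntegral_mono_set hint ?_ (HasSubset.Subset.eventuallyLE hsub)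
    refine (ae_restrict_iff' measurableSet_Ioi).2 (ae_of_all _ fun z hz => ?_)
    have hz0 : (0:ℝ) < z := hz
    show (0:ℝ) ≤ (1 + z) * g z
    nlinarith [hg z]
  calc (∫ z in Ici R, g z * z ^ γ) ≤ R ^ (γ - 1) * ∫ z in Ici R, (1 + z) * g z := by
        rw [← step2]; exact step1
    _ ≤ R ^ (γ - 1) * M := mul_le_mul_of_nonneg_left (step3.trans hM) hRγ

lemma split_integral {f : ℝ → ℝ} (hf : IntegrableOn f (Ioi 0) volume) {R : ℝ} (hR : 0 < R) :
    (∫ z in Ioi (0:ℝ), f z) = (∫ z in Ioo (0:ℝ) R, f z) + ∫ z in Ici R, f z := by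
  rw [← Ioo_union_Ici_eq_Ioi hR]
  exact setIntegral_union
    (Set.disjoint_left.2 fun x hx hx' => absurd hx' (not_le.2 hx.2)) measurableSet_Ici
    (hf.mono_set Set.Ioo_subset_Ioi_self) (hf.mono_set fun x hx => lt_of_lt_of_le hR hx)

lemma tendsto_of_approx {F : ℕ → ℝ} {L : ℝ}
    (h : ∀ ε : ℝ, 0 < ε → ∃ (Fa : ℕ → ℝ) (La : ℝ),
      Tendsto Fa atTop (nhds La) ∧ (∀ n, |F n - Fa n| ≤ ε) ∧ |L - La| ≤ ε) :
    Tendsto F atTop (nhds L) := by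
  rw [Metric.tendsto_atTop]
  intro ε hε
  obtain ⟨Fa, La, hFa, hFd, hLd⟩ := h (ε / 4) (by linarith)
  rw [Metric.tendsto_atTop] at hFa
  obtain ⟨N, hN⟩ := hFa (ε / 4) (by linarith)
  refine ⟨N, fun n hn => ?_⟩
  have h1 := hN n hn
  rw [Real.dist_eq] at h1 ⊢
  have e : F n - L = (F n - Fa n) + ((Fa n - La) + (La - L)) := by ring
  have t1 := abs_add_le (F n - Fa n) ((Fa n - La) + (La - L))
  have t2 := abs_add_le (Fa n - La) (La - L)
  have t3 : |La - L| = |L - La| := abs_sub_comm _ _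
  have t4 := hFd n
  rw [e]
  calc |(F n - Fa n) + ((Fa n - La) + (La - L))|
      ≤ |F n - Fa n| + (|Fa n - La| + |La - L|) := t1.trans (by linarith)
    _ < ε := by rw [t3]; linarith


lemma moment_conv (G : ℝ) (g : ℕ → ℝ → ℝ) (glim : ℝ → ℝ)
    (hgnn : ∀ n z, 0 ≤ g n z)
    (hgmeas : ∀ n, Measurable (g n))
    (hgint : ∀ n, IntegrableOn (fun z => (1 + z) * g n z) (Ioi 0) volume)
    (hgbd : ∀ n, (∫ z in Ioi (0:ℝ), (1 + z) * g n z) ≤ G)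
    (hglnn : ∀ z, 0 ≤ glim z)
    (hglm : AEStronglyMeasurable glim (volume.restrict (Ioi 0)))
    (hglint : IntegrableOn (fun z => (1 + z) * glim z) (Ioi 0) volume)
    (hweak : ∀ ψ : ℝ → ℝ, Measurable ψ → (∃ C, ∀ z, |ψ z| ≤ C) →
      Tendsto (fun n => ∫ z in Ioi (0:ℝ), g n z * ψ z) atTop
        (nhds (∫ z in Ioi (0:ℝ), glim z * ψ z)))
    {γ : ℝ} (hγ0 : 0 < γ) (hγ1 : γ < 1) :
    Tendsto (fun n => ∫ z in Ioi (0:ℝ), g n z * z ^ γ) atTop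
      (nhds (∫ z in Ioi (0:ℝ), glim z * z ^ γ)) := by
  have hGM : G ≤ max G (∫ z in Ioi (0:ℝ), (1 + z) * glim z) := le_max_left _ _
  have hglM : (∫ z in Ioi (0:ℝ), (1 + z) * glim z)
      ≤ max G (∫ z in Ioi (0:ℝ), (1 + z) * glim z) := le_max_right _ _
  refine tendsto_of_approx fun ε hε => ?_
  have hlim : Tendsto (fun R : ℝ => R ^ (γ - 1) * max G (∫ z in Ioi (0:ℝ), (1 + z) * glim z))
      atTop (nhds 0) := by
    have h0 : Tendsto (fun R : ℝ => R ^ (-(1 - γ))) atTop (nhds 0) :=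
      tendsto_rpow_neg_atTop (by linarith)
    have h2 := h0.mul_const (max G (∫ z in Ioi (0:ℝ), (1 + z) * glim z))
    rw [zero_mul] at h2
    refine h2.congr fun R => ?_
    rw [show -(1 - γ) = γ - 1 by ring]
  obtain ⟨R, hRε, hR1⟩ := ((hlim.eventually_lt_const hε).and (eventually_ge_atTop (1:ℝ))).exists
  have hR0 : (0:ℝ) < R := lt_of_lt_of_le one_pos hR1
  have hφm : Measurable ((Ioo (0:ℝ) R).indicator (fun z => z ^ γ)) :=
    (measurable_rpow_const γ hγ0.le).indicator measurableSet_Ioo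
  have hφb : ∀ z, |(Ioo (0:ℝ) R).indicator (fun z => z ^ γ) z| ≤ 1 + R := by
    intro z
    by_cases hz : z ∈ Ioo (0:ℝ) R
    · rw [Set.indicator_of_mem hz]
      have h1 : z ^ γ ≤ 1 + z := rpow_le_one_add hz.1 hγ0.le hγ1.le
      have h0 : 0 ≤ z ^ γ := Real.rpow_nonneg hz.1.le γ
      rw [abs_of_nonneg h0]; linarith [hz.2]
    · rw [Set.indicator_of_notMem hz]
      simp only [abs_zero]; linarith
  have hid : ∀ f : ℝ → ℝ,
      (∫ z in Ioi (0:ℝ), f z * (Ioo (0:ℝ) R).indicator (fun z => z ^ γ) z)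
        = ∫ z in Ioo (0:ℝ) R, f z * z ^ γ := by
    intro f
    have e : (fun z => f z * (Ioo (0:ℝ) R).indicator (fun z => z ^ γ) z)
        = (Ioo (0:ℝ) R).indicator (fun z => f z * z ^ γ) := by
      funext z
      by_cases hz : z ∈ Ioo (0:ℝ) R
      · rw [Set.indicator_of_mem hz, Set.indicator_of_mem hz]
      · rw [Set.indicator_of_notMem hz, Set.indicator_of_notMem hz, mul_zero]
    rw [e, setIntegral_indicator measurableSet_Ioo,
      Set.inter_eq_self_of_subset_right Set.Ioo_subset_Ioi_self]
  have hconv := hweak _ hφm ⟨1 + R, hφb⟩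
  have e1 : (fun n : ℕ => ∫ z in Ioi (0:ℝ), g n z * (Ioo (0:ℝ) R).indicator (fun z => z ^ γ) z)
      = fun n => ∫ z in Ioo (0:ℝ) R, g n z * z ^ γ := funext fun n => hid (g n)
  rw [e1, hid glim] at hconv
  refine ⟨fun n => ∫ z in Ioo (0:ℝ) R, g n z * z ^ γ, ∫ z in Ioo (0:ℝ) R, glim z * z ^ γ,
    hconv, ?_, ?_⟩
  · intro n
    have hsplit := split_integral
      (integrableOn_mul_rpow (hgnn n) ((hgmeas n).aestronglyMeasurable) (hgint n) hγ0 hγ1.le) hR0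
    have htail : (∫ z in Ici R, g n z * z ^ γ) ≤ R ^ (γ - 1) * G :=
      tail_bound (hgnn n) ((hgmeas n).aestronglyMeasurable) (hgint n) (hgbd n) hγ0 hγ1.le hR1
    have htail0 : 0 ≤ ∫ z in Ici R, g n z * z ^ γ :=
      setIntegral_nonneg measurableSet_Ici fun z hz =>
        mul_nonneg (hgnn n z) (Real.rpow_nonneg (le_trans (by linarith) hz) γ)
    rw [hsplit]
    have e : (∫ z in Ioo (0:ℝ) R, g n z * z ^ γ) + (∫ z in Ici R, g n z * z ^ γ)
        - (∫ z in Ioo (0:ℝ) R, g n z * z ^ γ) = ∫ z in Ici R, g n z * z ^ γ := by ring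
    rw [e, abs_of_nonneg htail0]
    have hRM : R ^ (γ - 1) * G ≤ R ^ (γ - 1) * max G (∫ z in Ioi (0:ℝ), (1 + z) * glim z) :=
      mul_le_mul_of_nonneg_left hGM (Real.rpow_nonneg hR0.le _)
    linarith
  · have hsplit := split_integral (integrableOn_mul_rpow hglnn hglm hglint hγ0 hγ1.le) hR0
    have htail : (∫ z in Ici R, glim z * z ^ γ)
        ≤ R ^ (γ - 1) * max G (∫ z in Ioi (0:ℝ), (1 + z) * glim z) :=
      tail_bound hglnn hglm hglint hglM hγ0 hγ1.le hR1
    have htail0 : 0 ≤ ∫ z in Ici R, glim z * z ^ γ :=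
      setIntegral_nonneg measurableSet_Ici fun z hz =>
        mul_nonneg (hglnn z) (Real.rpow_nonneg (le_trans (by linarith) hz) γ)
    rw [hsplit]
    have e : (∫ z in Ioo (0:ℝ) R, glim z * z ^ γ) + (∫ z in Ici R, glim z * z ^ γ)
        - (∫ z in Ioo (0:ℝ) R, glim z * z ^ γ) = ∫ z in Ici R, glim z * z ^ γ := by ring
    rw [e, abs_of_nonneg htail0]
    linarith

end B3Aux



/-- Weak `L¹((0,a))` convergence of the truncated collision loss terms. -/
theorem B3n_weak_convergence
    (k₁ α β G : ℝ) (g : ℕ → ℝ → ℝ) (glim : ℝ → ℝ)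
    (hk₁ : 0 ≤ k₁) (hα : 0 < α) (hαβ : α ≤ β) (hβ : β < 1) (hG : 0 < G)
    (hgnn : ∀ n z, 0 ≤ g n z)
    (hgmeas : ∀ n, Measurable (g n))
    (hgint : ∀ n, IntegrableOn (fun z => (1 + z) * g n z) (Ioi 0) volume)
    (hgbd : ∀ n, (∫ z in Ioi (0:ℝ), (1 + z) * g n z) ≤ G)
    (hglim : MemSplus glim)
    (hweak : ∀ ψ : ℝ → ℝ, Measurable ψ → (∃ C, ∀ z, |ψ z| ≤ C) →
      Tendsto (fun n => ∫ z in Ioi (0:ℝ), g n z * ψ z) atTop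
        (nhds (∫ z in Ioi (0:ℝ), glim z * ψ z))) :
    ∀ a > (0:ℝ), ∀ ψ : ℝ → ℝ, Measurable ψ → (∃ C, ∀ z, |ψ z| ≤ C) →
      Tendsto (fun n : ℕ => ∫ z in Ioo (0:ℝ) a, B3n (PhiN k₁ α β (n : ℝ)) (n : ℝ) (g n) z * ψ z)
        atTop (nhds (∫ z in Ioo (0:ℝ) a, B3 (Phi k₁ α β) glim z * ψ z)) := by
  intro a ha ψ hψm hψb
  obtain ⟨C, hC⟩ := hψb
  have hC0 : 0 ≤ C := le_trans (abs_nonneg _) (hC 0)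
  have hβ0 : 0 < β := lt_of_lt_of_le hα hαβ
  have hα1 : α < 1 := lt_of_le_of_lt hαβ hβ
  obtain ⟨hglnn, hglint⟩ := hglim
  have hglm : AEStronglyMeasurable glim (volume.restrict (Ioi 0)) := by
    have h1 : AEStronglyMeasurable (fun z : ℝ => (1 + z) * glim z) (volume.restrict (Ioi 0)) :=
      hglint.aestronglyMeasurable
    have h2 : AEStronglyMeasurable (fun z : ℝ => (1 + z)⁻¹ * ((1 + z) * glim z))
        (volume.restrict (Ioi 0)) :=
      (((measurable_const.add measurable_id).inv).aestronglyMeasurable).mul h1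
    refine h2.congr ?_
    refine (ae_restrict_iff' measurableSet_Ioi).2 (ae_of_all _ fun z hz => ?_)
    have hz0 : (0:ℝ) < z := hz
    have h1z : (0:ℝ) < 1 + z := by linarith
    show (1 + z)⁻¹ * ((1 + z) * glim z) = glim z
    rw [← mul_assoc, inv_mul_cancel₀ h1z.ne', one_mul]
  have hIg : ∀ n, IntegrableOn (g n) (Ioi 0) volume := fun n =>
    B3Aux.integrableOn_g (hgnn n) ((hgmeas n).aestronglyMeasurable) (hgint n)
  have hIgγ : ∀ n, ∀ γ' : ℝ, 0 < γ' → γ' ≤ 1 →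
      IntegrableOn (fun z => g n z * z ^ γ') (Ioi 0) volume := fun n γ' h1 h2 =>
    B3Aux.integrableOn_mul_rpow (hgnn n) ((hgmeas n).aestronglyMeasurable) (hgint n) h1 h2
  have hIgl : IntegrableOn glim (Ioi 0) volume := B3Aux.integrableOn_g hglnn hglm hglint
  have hIglγ : ∀ γ' : ℝ, 0 < γ' → γ' ≤ 1 →
      IntegrableOn (fun z => glim z * z ^ γ') (Ioi 0) volume := fun γ' h1 h2 =>
    B3Aux.integrableOn_mul_rpow hglnn hglm hglint h1 h2
  have hIgψ : ∀ n, ∀ γ' : ℝ, 0 < γ' → γ' ≤ 1 →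
      IntegrableOn (fun z => g n z * (z ^ γ' * ψ z)) (Ioo 0 a) volume := by
    intro n γ' h1 h2
    refine B3Aux.integrableOn_of_le measurableSet_Ioo ((hIg n).mono_set Set.Ioo_subset_Ioi_self)
      (((hgmeas n).mul ((B3Aux.measurable_rpow_const γ' h1.le).mul hψm)).aestronglyMeasurable)
      (K := (1 + a) * C) fun z hz => ?_
    have e0 : 0 ≤ z ^ γ' := Real.rpow_nonneg hz.1.le _
    have e1 : z ^ γ' ≤ 1 + z := B3Aux.rpow_le_one_add hz.1 h1.le h2
    have e2 : z ^ γ' ≤ 1 + a := by linarith [hz.2]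
    have e3 : z ^ γ' * |ψ z| ≤ (1 + a) * C := mul_le_mul e2 (hC z) (abs_nonneg _) (by linarith)
    have e4 := mul_le_mul_of_nonneg_left e3 (hgnn n z)
    calc |g n z * (z ^ γ' * ψ z)| = g n z * (z ^ γ' * |ψ z|) := by
          rw [abs_mul, abs_mul, abs_of_nonneg (hgnn n z), abs_of_nonneg e0]
      _ ≤ g n z * ((1 + a) * C) := e4
      _ = (1 + a) * C * g n z := by ring
  have hIglψ : ∀ γ' : ℝ, 0 < γ' → γ' ≤ 1 →
      IntegrableOn (fun z => glim z * (z ^ γ' * ψ z)) (Ioo 0 a) volume := by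
    intro γ' h1 h2
    refine B3Aux.integrableOn_of_le measurableSet_Ioo (hIgl.mono_set Set.Ioo_subset_Ioi_self)
      ((hglm.mono_measure (Measure.restrict_mono Set.Ioo_subset_Ioi_self le_rfl)).mul
        ((B3Aux.measurable_rpow_const γ' h1.le).mul hψm).aestronglyMeasurable)
      (K := (1 + a) * C) fun z hz => ?_
    have e0 : 0 ≤ z ^ γ' := Real.rpow_nonneg hz.1.le _
    have e1 : z ^ γ' ≤ 1 + z := B3Aux.rpow_le_one_add hz.1 h1.le h2
    have e2 : z ^ γ' ≤ 1 + a := by linarith [hz.2]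
    have e3 : z ^ γ' * |ψ z| ≤ (1 + a) * C := mul_le_mul e2 (hC z) (abs_nonneg _) (by linarith)
    have e4 := mul_le_mul_of_nonneg_left e3 (hglnn z)
    calc |glim z * (z ^ γ' * ψ z)| = glim z * (z ^ γ' * |ψ z|) := by
          rw [abs_mul, abs_mul, abs_of_nonneg (hglnn z), abs_of_nonneg e0]
      _ ≤ glim z * ((1 + a) * C) := e4
      _ = (1 + a) * C * glim z := by ring
  have hQaconv := B3Aux.moment_conv G g glim hgnn hgmeas hgint hgbd hglnn hglm hglint hweak hα hα1
  have hQbconv := B3Aux.moment_conv G g glim hgnn hgmeas hgint hgbd hglnn hglm hglint hweak hβ0 hβ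
  have hPconv : ∀ γ' : ℝ, 0 < γ' → γ' ≤ 1 →
      Tendsto (fun n => ∫ z in Ioo (0:ℝ) a, g n z * (z ^ γ' * ψ z)) atTop
        (nhds (∫ z in Ioo (0:ℝ) a, glim z * (z ^ γ' * ψ z))) := by
    intro γ' h1 h2
    have hφm : Measurable ((Ioo (0:ℝ) a).indicator (fun z => z ^ γ' * ψ z)) :=
      ((B3Aux.measurable_rpow_const γ' h1.le).mul hψm).indicator measurableSet_Ioo
    have hφb : ∀ z, |(Ioo (0:ℝ) a).indicator (fun z => z ^ γ' * ψ z) z| ≤ (1 + a) * C := by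
      intro z
      by_cases hz : z ∈ Ioo (0:ℝ) a
      · rw [Set.indicator_of_mem hz]
        have e0 : 0 ≤ z ^ γ' := Real.rpow_nonneg hz.1.le _
        have e1 : z ^ γ' ≤ 1 + z := B3Aux.rpow_le_one_add hz.1 h1.le h2
        have e2 : z ^ γ' ≤ 1 + a := by linarith [hz.2]
        calc |z ^ γ' * ψ z| = z ^ γ' * |ψ z| := by rw [abs_mul, abs_of_nonneg e0]
          _ ≤ (1 + a) * C := mul_le_mul e2 (hC z) (abs_nonneg _) (by linarith)
      · rw [Set.indicator_of_notMem hz]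
        simp only [abs_zero]
        exact mul_nonneg (by linarith) hC0
    have hid : ∀ f : ℝ → ℝ,
        (∫ z in Ioi (0:ℝ), f z * (Ioo (0:ℝ) a).indicator (fun z => z ^ γ' * ψ z) z)
          = ∫ z in Ioo (0:ℝ) a, f z * (z ^ γ' * ψ z) := by
      intro f
      have e : (fun z => f z * (Ioo (0:ℝ) a).indicator (fun z => z ^ γ' * ψ z) z)
          = (Ioo (0:ℝ) a).indicator (fun z => f z * (z ^ γ' * ψ z)) := by
        funext z
        by_cases hz : z ∈ Ioo (0:ℝ) a
        · rw [Set.indicator_of_mem hz, Set.indicator_of_mem hz]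
        · rw [Set.indicator_of_notMem hz, Set.indicator_of_notMem hz, mul_zero]
      rw [e, setIntegral_indicator measurableSet_Ioo,
        Set.inter_eq_self_of_subset_right Set.Ioo_subset_Ioi_self]
    have hconv := hweak _ hφm ⟨(1 + a) * C, hφb⟩
    have e1 : (fun n : ℕ =>
        ∫ z in Ioi (0:ℝ), g n z * (Ioo (0:ℝ) a).indicator (fun z => z ^ γ' * ψ z) z)
        = fun n => ∫ z in Ioo (0:ℝ) a, g n z * (z ^ γ' * ψ z) := funext fun n => hid (g n)
    rw [e1, hid glim] at hconv
    exact hconv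
  have hPaconv := hPconv α hα hα1.le
  have hPbconv := hPconv β hβ0 hβ.le
  have hT : (∫ z in Ioo (0:ℝ) a, B3 (Phi k₁ α β) glim z * ψ z)
      = k₁ * ((∫ z in Ioi (0:ℝ), glim z * z ^ β) * (∫ z in Ioo (0:ℝ) a, glim z * (z ^ α * ψ z))
        + (∫ z in Ioi (0:ℝ), glim z * z ^ α) * (∫ z in Ioo (0:ℝ) a, glim z * (z ^ β * ψ z))) := by
    have hpt : ∀ z ∈ Ioo (0:ℝ) a, B3 (Phi k₁ α β) glim z * ψ z
        = (k₁ * (∫ z₁ in Ioi (0:ℝ), glim z₁ * z₁ ^ β)) * (glim z * (z ^ α * ψ z))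
          + (k₁ * (∫ z₁ in Ioi (0:ℝ), glim z₁ * z₁ ^ α)) * (glim z * (z ^ β * ψ z)) := by
      intro z hz
      have hB : B3 (Phi k₁ α β) glim z
          = (k₁ * glim z * z ^ α) * (∫ z₁ in Ioi (0:ℝ), glim z₁ * z₁ ^ β)
            + (k₁ * glim z * z ^ β) * (∫ z₁ in Ioi (0:ℝ), glim z₁ * z₁ ^ α) := by
        unfold B3
        rw [show (fun z₁ => Phi k₁ α β z z₁ * glim z * glim z₁)
            = fun z₁ => (k₁ * glim z * z ^ α) * (glim z₁ * z₁ ^ β)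
              + (k₁ * glim z * z ^ β) * (glim z₁ * z₁ ^ α) from
          funext fun z₁ => by unfold Phi; ring]
        rw [integral_add ((hIglγ β hβ0 hβ.le).const_mul _) ((hIglγ α hα hα1.le).const_mul _),
          integral_const_mul, integral_const_mul]
      rw [hB]; ring
    rw [setIntegral_congr_fun measurableSet_Ioo hpt,
      integral_add ((hIglψ α hα hα1.le).const_mul _) ((hIglψ β hβ0 hβ.le).const_mul _),
      integral_const_mul, integral_const_mul]
    ring
  have hev : ∀ᶠ n : ℕ in atTop, a + 1 ≤ (n:ℝ) :=
    (tendsto_natCast_atTop_atTop (R := ℝ)).eventually_ge_atTop (a + 1)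
  have hEbd : ∀ᶠ n : ℕ in atTop,
      |(∫ z in Ioo (0:ℝ) a, B3n (PhiN k₁ α β (n:ℝ)) (n:ℝ) (g n) z * ψ z)
        - k₁ * ((∫ z in Ioi (0:ℝ), g n z * z ^ β) * (∫ z in Ioo (0:ℝ) a, g n z * (z ^ α * ψ z))
          + (∫ z in Ioi (0:ℝ), g n z * z ^ α) * (∫ z in Ioo (0:ℝ) a, g n z * (z ^ β * ψ z)))|
      ≤ (2 * k₁ * C * (1 + a) * G * G) * ((n:ℝ) - a) ^ (β - 1) := by
    filter_upwards [hev] with n hn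
    have hna1 : 1 ≤ (n:ℝ) - a := by linarith
    have hna0 : 0 < (n:ℝ) - a := by linarith
    have hXnn : 0 ≤ ((n:ℝ) - a) ^ (β - 1) := Real.rpow_nonneg hna0.le _
    have hSanti : ∀ γ' : ℝ, 0 < γ' → γ' ≤ 1 →
        Antitone (fun z : ℝ => ∫ z₁ in Ioo (0:ℝ) ((n:ℝ) - z), g n z₁ * z₁ ^ γ') := by
      intro γ' h1 h2 z z' hzz'
      refine setIntegral_mono_set ((hIgγ n γ' h1 h2).mono_set Set.Ioo_subset_Ioi_self) ?_ ?_
      · refine (ae_restrict_iff' measurableSet_Ioo).2 (ae_of_all _ fun z₁ hz₁ => ?_)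
        exact mul_nonneg (hgnn n z₁) (Real.rpow_nonneg hz₁.1.le _)
      · exact HasSubset.Subset.eventuallyLE (Set.Ioo_subset_Ioo_right (by linarith))
    have hSmeas : ∀ γ' : ℝ, 0 < γ' → γ' ≤ 1 →
        Measurable (fun z : ℝ => ∫ z₁ in Ioo (0:ℝ) ((n:ℝ) - z), g n z₁ * z₁ ^ γ') :=
      fun γ' h1 h2 => (hSanti γ' h1 h2).measurable
    have hSnn : ∀ γ' : ℝ, ∀ z : ℝ, 0 ≤ ∫ z₁ in Ioo (0:ℝ) ((n:ℝ) - z), g n z₁ * z₁ ^ γ' :=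
      fun γ' z => setIntegral_nonneg measurableSet_Ioo fun z₁ hz₁ =>
        mul_nonneg (hgnn n z₁) (Real.rpow_nonneg hz₁.1.le _)
    have hSleQ : ∀ γ' : ℝ, 0 < γ' → γ' ≤ 1 → ∀ z : ℝ,
        (∫ z₁ in Ioo (0:ℝ) ((n:ℝ) - z), g n z₁ * z₁ ^ γ')
          ≤ ∫ z₁ in Ioi (0:ℝ), g n z₁ * z₁ ^ γ' := by
      intro γ' h1 h2 z
      refine setIntegral_mono_set (hIgγ n γ' h1 h2) ?_
        (HasSubset.Subset.eventuallyLE Set.Ioo_subset_Ioi_self)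
      refine (ae_restrict_iff' measurableSet_Ioi).2 (ae_of_all _ fun z₁ hz₁ => ?_)
      exact mul_nonneg (hgnn n z₁) (Real.rpow_nonneg (le_of_lt hz₁) _)
    have hQS : ∀ γ' : ℝ, 0 < γ' → γ' ≤ 1 → γ' ≤ β → ∀ z ∈ Ioo (0:ℝ) a,
        (∫ z₁ in Ioi (0:ℝ), g n z₁ * z₁ ^ γ')
            - (∫ z₁ in Ioo (0:ℝ) ((n:ℝ) - z), g n z₁ * z₁ ^ γ')
          ≤ ((n:ℝ) - a) ^ (β - 1) * G := by
      intro γ' h1 h2 h3 z hz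
      have hnz1 : 1 ≤ (n:ℝ) - z := by linarith [hz.2]
      have hnz0 : 0 < (n:ℝ) - z := by linarith
      have hsplit := B3Aux.split_integral (hIgγ n γ' h1 h2) hnz0
      have htail := B3Aux.tail_bound (hgnn n) ((hgmeas n).aestronglyMeasurable) (hgint n)
        (hgbd n) h1 h2 hnz1
      have e2 : ((n:ℝ) - z) ^ (γ' - 1) ≤ ((n:ℝ) - a) ^ (γ' - 1) :=
        Real.rpow_le_rpow_of_nonpos hna0 (by linarith [hz.2]) (by linarith)
      have e3 : ((n:ℝ) - a) ^ (γ' - 1) ≤ ((n:ℝ) - a) ^ (β - 1) :=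
        Real.rpow_le_rpow_of_exponent_le hna1 (by linarith)
      have e4 : ((n:ℝ) - z) ^ (γ' - 1) * G ≤ ((n:ℝ) - a) ^ (β - 1) * G :=
        mul_le_mul_of_nonneg_right (e2.trans e3) hG.le
      linarith [htail, hsplit]
    have key : ∀ z ∈ Ioo (0:ℝ) a, B3n (PhiN k₁ α β (n:ℝ)) (n:ℝ) (g n) z * ψ z
        = (k₁ * g n z * (z ^ α * (∫ z₁ in Ioo (0:ℝ) ((n:ℝ) - z), g n z₁ * z₁ ^ β)
            + z ^ β * (∫ z₁ in Ioo (0:ℝ) ((n:ℝ) - z), g n z₁ * z₁ ^ α))) * ψ z := by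
      intro z hz
      have e1 : B3n (PhiN k₁ α β (n:ℝ)) (n:ℝ) (g n) z
          = ∫ z₁ in Ioo (0:ℝ) ((n:ℝ) - z),
              ((k₁ * g n z * z ^ α) * (g n z₁ * z₁ ^ β)
                + (k₁ * g n z * z ^ β) * (g n z₁ * z₁ ^ α)) := by
        unfold B3n
        refine setIntegral_congr_fun measurableSet_Ioo fun z₁ hz₁ => ?_
        unfold PhiN Phi
        rw [Set.indicator_of_mem (show z + z₁ ∈ Ioo (0:ℝ) (n:ℝ) from
          ⟨add_pos hz.1 hz₁.1, by linarith [hz₁.2]⟩)]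
        ring
      rw [e1, integral_add
          (((hIgγ n β hβ0 hβ.le).mono_set Set.Ioo_subset_Ioi_self).const_mul _)
          (((hIgγ n α hα hα1.le).mono_set Set.Ioo_subset_Ioi_self).const_mul _),
        integral_const_mul, integral_const_mul]
      ring
    have hFeq : (∫ z in Ioo (0:ℝ) a, B3n (PhiN k₁ α β (n:ℝ)) (n:ℝ) (g n) z * ψ z)
        = ∫ z in Ioo (0:ℝ) a,
            (k₁ * g n z * (z ^ α * (∫ z₁ in Ioo (0:ℝ) ((n:ℝ) - z), g n z₁ * z₁ ^ β)
              + z ^ β * (∫ z₁ in Ioo (0:ℝ) ((n:ℝ) - z), g n z₁ * z₁ ^ α))) * ψ z :=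
      setIntegral_congr_fun measurableSet_Ioo key
    have hIS : IntegrableOn (fun z =>
        (k₁ * g n z * (z ^ α * (∫ z₁ in Ioo (0:ℝ) ((n:ℝ) - z), g n z₁ * z₁ ^ β)
          + z ^ β * (∫ z₁ in Ioo (0:ℝ) ((n:ℝ) - z), g n z₁ * z₁ ^ α))) * ψ z)
        (Ioo 0 a) volume := by
      refine B3Aux.integrableOn_of_le measurableSet_Ioo ((hIg n).mono_set Set.Ioo_subset_Ioi_self)
        ?_ (K := k₁ * ((1 + a) * ((∫ z₁ in Ioi (0:ℝ), g n z₁ * z₁ ^ β)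
            + (∫ z₁ in Ioi (0:ℝ), g n z₁ * z₁ ^ α))) * C) ?_
      · exact ((((hgmeas n).const_mul k₁).mul
          (((B3Aux.measurable_rpow_const α hα.le).mul (hSmeas β hβ0 hβ.le)).add
            ((B3Aux.measurable_rpow_const β hβ0.le).mul (hSmeas α hα hα1.le)))).mul
              hψm).aestronglyMeasurable
      · intro z hz
        have hz0 := hz.1
        have hαnn : 0 ≤ z ^ α := Real.rpow_nonneg hz0.le _
        have hβnn : 0 ≤ z ^ β := Real.rpow_nonneg hz0.le _
        have hαle : z ^ α ≤ 1 + a := by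
          linarith [B3Aux.rpow_le_one_add hz0 hα.le hα1.le, hz.2]
        have hβle : z ^ β ≤ 1 + a := by
          linarith [B3Aux.rpow_le_one_add hz0 hβ0.le hβ.le, hz.2]
        have t1 : z ^ α * (∫ z₁ in Ioo (0:ℝ) ((n:ℝ) - z), g n z₁ * z₁ ^ β)
            ≤ (1 + a) * (∫ z₁ in Ioi (0:ℝ), g n z₁ * z₁ ^ β) :=
          mul_le_mul hαle (hSleQ β hβ0 hβ.le z) (hSnn β z) (by linarith)
        have t2 : z ^ β * (∫ z₁ in Ioo (0:ℝ) ((n:ℝ) - z), g n z₁ * z₁ ^ α)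
            ≤ (1 + a) * (∫ z₁ in Ioi (0:ℝ), g n z₁ * z₁ ^ α) :=
          mul_le_mul hβle (hSleQ α hα hα1.le z) (hSnn α z) (by linarith)
        have inner0 : 0 ≤ z ^ α * (∫ z₁ in Ioo (0:ℝ) ((n:ℝ) - z), g n z₁ * z₁ ^ β)
            + z ^ β * (∫ z₁ in Ioo (0:ℝ) ((n:ℝ) - z), g n z₁ * z₁ ^ α) :=
          add_nonneg (mul_nonneg hαnn (hSnn β z)) (mul_nonneg hβnn (hSnn α z))
        have A0 : 0 ≤ k₁ * g n z * (z ^ α * (∫ z₁ in Ioo (0:ℝ) ((n:ℝ) - z), g n z₁ * z₁ ^ β)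
            + z ^ β * (∫ z₁ in Ioo (0:ℝ) ((n:ℝ) - z), g n z₁ * z₁ ^ α)) :=
          mul_nonneg (mul_nonneg hk₁ (hgnn n z)) inner0
        calc |(k₁ * g n z * (z ^ α * (∫ z₁ in Ioo (0:ℝ) ((n:ℝ) - z), g n z₁ * z₁ ^ β)
              + z ^ β * (∫ z₁ in Ioo (0:ℝ) ((n:ℝ) - z), g n z₁ * z₁ ^ α))) * ψ z|
            = (k₁ * g n z * (z ^ α * (∫ z₁ in Ioo (0:ℝ) ((n:ℝ) - z), g n z₁ * z₁ ^ β)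
              + z ^ β * (∫ z₁ in Ioo (0:ℝ) ((n:ℝ) - z), g n z₁ * z₁ ^ α))) * |ψ z| := by
              rw [abs_mul, abs_of_nonneg A0]
          _ ≤ (k₁ * g n z * (z ^ α * (∫ z₁ in Ioo (0:ℝ) ((n:ℝ) - z), g n z₁ * z₁ ^ β)
              + z ^ β * (∫ z₁ in Ioo (0:ℝ) ((n:ℝ) - z), g n z₁ * z₁ ^ α))) * C :=
              mul_le_mul_of_nonneg_left (hC z) A0
          _ ≤ (k₁ * g n z * ((1 + a) * ((∫ z₁ in Ioi (0:ℝ), g n z₁ * z₁ ^ β)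
              + (∫ z₁ in Ioi (0:ℝ), g n z₁ * z₁ ^ α)))) * C := by
              refine mul_le_mul_of_nonneg_right ?_ hC0
              refine mul_le_mul_of_nonneg_left ?_ (mul_nonneg hk₁ (hgnn n z))
              calc z ^ α * (∫ z₁ in Ioo (0:ℝ) ((n:ℝ) - z), g n z₁ * z₁ ^ β)
                  + z ^ β * (∫ z₁ in Ioo (0:ℝ) ((n:ℝ) - z), g n z₁ * z₁ ^ α)
                  ≤ (1 + a) * (∫ z₁ in Ioi (0:ℝ), g n z₁ * z₁ ^ β)
                    + (1 + a) * (∫ z₁ in Ioi (0:ℝ), g n z₁ * z₁ ^ α) := add_le_add t1 t2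
                _ = (1 + a) * ((∫ z₁ in Ioi (0:ℝ), g n z₁ * z₁ ^ β)
                    + (∫ z₁ in Ioi (0:ℝ), g n z₁ * z₁ ^ α)) := by ring
          _ = (k₁ * ((1 + a) * ((∫ z₁ in Ioi (0:ℝ), g n z₁ * z₁ ^ β)
              + (∫ z₁ in Ioi (0:ℝ), g n z₁ * z₁ ^ α))) * C) * g n z := by ring
    have hsum : IntegrableOn (fun z =>
        (k₁ * (∫ z₁ in Ioi (0:ℝ), g n z₁ * z₁ ^ β)) * (g n z * (z ^ α * ψ z))
          + (k₁ * (∫ z₁ in Ioi (0:ℝ), g n z₁ * z₁ ^ α)) * (g n z * (z ^ β * ψ z)))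
        (Ioo 0 a) volume :=
      ((hIgψ n α hα hα1.le).const_mul _).add ((hIgψ n β hβ0 hβ.le).const_mul _)
    have hGn : k₁ * ((∫ z in Ioi (0:ℝ), g n z * z ^ β) * (∫ z in Ioo (0:ℝ) a, g n z * (z ^ α * ψ z))
          + (∫ z in Ioi (0:ℝ), g n z * z ^ α) * (∫ z in Ioo (0:ℝ) a, g n z * (z ^ β * ψ z)))
        = ∫ z in Ioo (0:ℝ) a,
            ((k₁ * (∫ z₁ in Ioi (0:ℝ), g n z₁ * z₁ ^ β)) * (g n z * (z ^ α * ψ z))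
              + (k₁ * (∫ z₁ in Ioi (0:ℝ), g n z₁ * z₁ ^ α)) * (g n z * (z ^ β * ψ z))) := by
      rw [integral_add ((hIgψ n α hα hα1.le).const_mul _) ((hIgψ n β hβ0 hβ.le).const_mul _),
        integral_const_mul, integral_const_mul]
      ring
    rw [hFeq, hGn, ← integral_sub hIS hsum]
    have hdbd : ∀ z ∈ Ioo (0:ℝ) a,
        |(k₁ * g n z * (z ^ α * (∫ z₁ in Ioo (0:ℝ) ((n:ℝ) - z), g n z₁ * z₁ ^ β)
            + z ^ β * (∫ z₁ in Ioo (0:ℝ) ((n:ℝ) - z), g n z₁ * z₁ ^ α))) * ψ z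
          - ((k₁ * (∫ z₁ in Ioi (0:ℝ), g n z₁ * z₁ ^ β)) * (g n z * (z ^ α * ψ z))
            + (k₁ * (∫ z₁ in Ioi (0:ℝ), g n z₁ * z₁ ^ α)) * (g n z * (z ^ β * ψ z)))|
        ≤ (k₁ * C * (2 * (1 + a) * (((n:ℝ) - a) ^ (β - 1) * G))) * g n z := by
      intro z hz
      have hz0 := hz.1
      have hαnn : 0 ≤ z ^ α := Real.rpow_nonneg hz0.le _
      have hβnn : 0 ≤ z ^ β := Real.rpow_nonneg hz0.le _
      have hαle : z ^ α ≤ 1 + a := by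
        linarith [B3Aux.rpow_le_one_add hz0 hα.le hα1.le, hz.2]
      have hβle : z ^ β ≤ 1 + a := by
        linarith [B3Aux.rpow_le_one_add hz0 hβ0.le hβ.le, hz.2]
      have hDnn : 0 ≤ ((n:ℝ) - a) ^ (β - 1) * G := mul_nonneg hXnn hG.le
      have b1 : z ^ α * ((∫ z₁ in Ioi (0:ℝ), g n z₁ * z₁ ^ β)
            - (∫ z₁ in Ioo (0:ℝ) ((n:ℝ) - z), g n z₁ * z₁ ^ β))
          ≤ (1 + a) * (((n:ℝ) - a) ^ (β - 1) * G) :=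
        mul_le_mul hαle (hQS β hβ0 hβ.le le_rfl z hz)
          (sub_nonneg.2 (hSleQ β hβ0 hβ.le z)) (by linarith)
      have b2 : z ^ β * ((∫ z₁ in Ioi (0:ℝ), g n z₁ * z₁ ^ α)
            - (∫ z₁ in Ioo (0:ℝ) ((n:ℝ) - z), g n z₁ * z₁ ^ α))
          ≤ (1 + a) * (((n:ℝ) - a) ^ (β - 1) * G) :=
        mul_le_mul hβle (hQS α hα hα1.le hαβ z hz)
          (sub_nonneg.2 (hSleQ α hα hα1.le z)) (by linarith)
      have b1nn : 0 ≤ z ^ α * ((∫ z₁ in Ioi (0:ℝ), g n z₁ * z₁ ^ β)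
            - (∫ z₁ in Ioo (0:ℝ) ((n:ℝ) - z), g n z₁ * z₁ ^ β)) :=
        mul_nonneg hαnn (sub_nonneg.2 (hSleQ β hβ0 hβ.le z))
      have b2nn : 0 ≤ z ^ β * ((∫ z₁ in Ioi (0:ℝ), g n z₁ * z₁ ^ α)
            - (∫ z₁ in Ioo (0:ℝ) ((n:ℝ) - z), g n z₁ * z₁ ^ α)) :=
        mul_nonneg hβnn (sub_nonneg.2 (hSleQ α hα hα1.le z))
      have hX : |z ^ α * ((∫ z₁ in Ioo (0:ℝ) ((n:ℝ) - z), g n z₁ * z₁ ^ β)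
            - (∫ z₁ in Ioi (0:ℝ), g n z₁ * z₁ ^ β))
          + z ^ β * ((∫ z₁ in Ioo (0:ℝ) ((n:ℝ) - z), g n z₁ * z₁ ^ α)
            - (∫ z₁ in Ioi (0:ℝ), g n z₁ * z₁ ^ α))|
          ≤ 2 * ((1 + a) * (((n:ℝ) - a) ^ (β - 1) * G)) := by
        have e5 : z ^ α * ((∫ z₁ in Ioo (0:ℝ) ((n:ℝ) - z), g n z₁ * z₁ ^ β)
              - (∫ z₁ in Ioi (0:ℝ), g n z₁ * z₁ ^ β))
            = -(z ^ α * ((∫ z₁ in Ioi (0:ℝ), g n z₁ * z₁ ^ β)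
              - (∫ z₁ in Ioo (0:ℝ) ((n:ℝ) - z), g n z₁ * z₁ ^ β))) := by ring
        have e6 : z ^ β * ((∫ z₁ in Ioo (0:ℝ) ((n:ℝ) - z), g n z₁ * z₁ ^ α)
              - (∫ z₁ in Ioi (0:ℝ), g n z₁ * z₁ ^ α))
            = -(z ^ β * ((∫ z₁ in Ioi (0:ℝ), g n z₁ * z₁ ^ α)
              - (∫ z₁ in Ioo (0:ℝ) ((n:ℝ) - z), g n z₁ * z₁ ^ α))) := by ring
        rw [abs_le]
        constructor
        · rw [e5, e6]; linarith [b1, b2]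
        · rw [e5, e6]; linarith [b1nn, b2nn, mul_nonneg (show (0:ℝ) ≤ 1 + a by linarith) hDnn]
      have ed : (k₁ * g n z * (z ^ α * (∫ z₁ in Ioo (0:ℝ) ((n:ℝ) - z), g n z₁ * z₁ ^ β)
            + z ^ β * (∫ z₁ in Ioo (0:ℝ) ((n:ℝ) - z), g n z₁ * z₁ ^ α))) * ψ z
          - ((k₁ * (∫ z₁ in Ioi (0:ℝ), g n z₁ * z₁ ^ β)) * (g n z * (z ^ α * ψ z))
            + (k₁ * (∫ z₁ in Ioi (0:ℝ), g n z₁ * z₁ ^ α)) * (g n z * (z ^ β * ψ z)))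
          = k₁ * g n z * ψ z * (z ^ α * ((∫ z₁ in Ioo (0:ℝ) ((n:ℝ) - z), g n z₁ * z₁ ^ β)
              - (∫ z₁ in Ioi (0:ℝ), g n z₁ * z₁ ^ β))
            + z ^ β * ((∫ z₁ in Ioo (0:ℝ) ((n:ℝ) - z), g n z₁ * z₁ ^ α)
              - (∫ z₁ in Ioi (0:ℝ), g n z₁ * z₁ ^ α))) := by ring
      rw [ed]
      calc |k₁ * g n z * ψ z * (z ^ α * ((∫ z₁ in Ioo (0:ℝ) ((n:ℝ) - z), g n z₁ * z₁ ^ β)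
              - (∫ z₁ in Ioi (0:ℝ), g n z₁ * z₁ ^ β))
            + z ^ β * ((∫ z₁ in Ioo (0:ℝ) ((n:ℝ) - z), g n z₁ * z₁ ^ α)
              - (∫ z₁ in Ioi (0:ℝ), g n z₁ * z₁ ^ α)))|
          = k₁ * g n z * |ψ z| * |z ^ α * ((∫ z₁ in Ioo (0:ℝ) ((n:ℝ) - z), g n z₁ * z₁ ^ β)
              - (∫ z₁ in Ioi (0:ℝ), g n z₁ * z₁ ^ β))
            + z ^ β * ((∫ z₁ in Ioo (0:ℝ) ((n:ℝ) - z), g n z₁ * z₁ ^ α)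
              - (∫ z₁ in Ioi (0:ℝ), g n z₁ * z₁ ^ α))| := by
            rw [abs_mul, abs_mul, abs_mul, abs_of_nonneg hk₁, abs_of_nonneg (hgnn n z)]
        _ ≤ (k₁ * g n z * C) * (2 * ((1 + a) * (((n:ℝ) - a) ^ (β - 1) * G))) := by
            refine mul_le_mul ?_ hX (abs_nonneg _)
              (mul_nonneg (mul_nonneg hk₁ (hgnn n z)) hC0)
            exact mul_le_mul_of_nonneg_left (hC z) (mul_nonneg hk₁ (hgnn n z))
        _ = (k₁ * C * (2 * (1 + a) * (((n:ℝ) - a) ^ (β - 1) * G))) * g n z := by ring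
    have hc0 : 0 ≤ k₁ * C * (2 * (1 + a) * (((n:ℝ) - a) ^ (β - 1) * G)) :=
      mul_nonneg (mul_nonneg hk₁ hC0)
        (mul_nonneg (by linarith) (mul_nonneg hXnn hG.le))
    have hdint := hIS.sub hsum
    have hgleG : (∫ z in Ioo (0:ℝ) a, g n z) ≤ G := by
      have s1 : (∫ z in Ioo (0:ℝ) a, g n z) ≤ ∫ z in Ioi (0:ℝ), g n z := by
        refine setIntegral_mono_set (hIg n) ?_
          (HasSubset.Subset.eventuallyLE Set.Ioo_subset_Ioi_self)
        exact (ae_restrict_iff' measurableSet_Ioi).2 (ae_of_all _ fun z hz => hgnn n z)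
      have s2 : (∫ z in Ioi (0:ℝ), g n z) ≤ ∫ z in Ioi (0:ℝ), (1 + z) * g n z := by
        refine setIntegral_mono_on (hIg n) (hgint n) measurableSet_Ioi fun z hz => ?_
        have hz0 : (0:ℝ) < z := hz
        nlinarith [hgnn n z]
      linarith [hgbd n]
    calc |∫ z in Ioo (0:ℝ) a,
          ((k₁ * g n z * (z ^ α * (∫ z₁ in Ioo (0:ℝ) ((n:ℝ) - z), g n z₁ * z₁ ^ β)
            + z ^ β * (∫ z₁ in Ioo (0:ℝ) ((n:ℝ) - z), g n z₁ * z₁ ^ α))) * ψ z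
          - ((k₁ * (∫ z₁ in Ioi (0:ℝ), g n z₁ * z₁ ^ β)) * (g n z * (z ^ α * ψ z))
            + (k₁ * (∫ z₁ in Ioi (0:ℝ), g n z₁ * z₁ ^ α)) * (g n z * (z ^ β * ψ z))))|
        ≤ ∫ z in Ioo (0:ℝ) a,
          |(k₁ * g n z * (z ^ α * (∫ z₁ in Ioo (0:ℝ) ((n:ℝ) - z), g n z₁ * z₁ ^ β)
            + z ^ β * (∫ z₁ in Ioo (0:ℝ) ((n:ℝ) - z), g n z₁ * z₁ ^ α))) * ψ z
          - ((k₁ * (∫ z₁ in Ioi (0:ℝ), g n z₁ * z₁ ^ β)) * (g n z * (z ^ α * ψ z))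
            + (k₁ * (∫ z₁ in Ioi (0:ℝ), g n z₁ * z₁ ^ α)) * (g n z * (z ^ β * ψ z)))| := by
          simpa [Real.norm_eq_abs] using
            norm_integral_le_integral_norm (μ := volume.restrict (Ioo (0:ℝ) a))
              (fun z => (k₁ * g n z * (z ^ α * (∫ z₁ in Ioo (0:ℝ) ((n:ℝ) - z), g n z₁ * z₁ ^ β)
                + z ^ β * (∫ z₁ in Ioo (0:ℝ) ((n:ℝ) - z), g n z₁ * z₁ ^ α))) * ψ z
              - ((k₁ * (∫ z₁ in Ioi (0:ℝ), g n z₁ * z₁ ^ β)) * (g n z * (z ^ α * ψ z))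
                + (k₁ * (∫ z₁ in Ioi (0:ℝ), g n z₁ * z₁ ^ α)) * (g n z * (z ^ β * ψ z))))
      _ ≤ ∫ z in Ioo (0:ℝ) a,
            (k₁ * C * (2 * (1 + a) * (((n:ℝ) - a) ^ (β - 1) * G))) * g n z := by
          refine setIntegral_mono_on hdint.abs
            (((hIg n).mono_set Set.Ioo_subset_Ioi_self).const_mul _)
            measurableSet_Ioo fun z hz => hdbd z hz
      _ = (k₁ * C * (2 * (1 + a) * (((n:ℝ) - a) ^ (β - 1) * G)))
            * ∫ z in Ioo (0:ℝ) a, g n z := integral_const_mul _ _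
      _ ≤ (k₁ * C * (2 * (1 + a) * (((n:ℝ) - a) ^ (β - 1) * G))) * G :=
          mul_le_mul_of_nonneg_left hgleG hc0
      _ = (2 * k₁ * C * (1 + a) * G * G) * ((n:ℝ) - a) ^ (β - 1) := by ring
  have hGconv : Tendsto (fun n : ℕ =>
      k₁ * ((∫ z in Ioi (0:ℝ), g n z * z ^ β) * (∫ z in Ioo (0:ℝ) a, g n z * (z ^ α * ψ z))
        + (∫ z in Ioi (0:ℝ), g n z * z ^ α) * (∫ z in Ioo (0:ℝ) a, g n z * (z ^ β * ψ z)))) atTop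
      (nhds (k₁ * ((∫ z in Ioi (0:ℝ), glim z * z ^ β)
          * (∫ z in Ioo (0:ℝ) a, glim z * (z ^ α * ψ z))
        + (∫ z in Ioi (0:ℝ), glim z * z ^ α)
          * (∫ z in Ioo (0:ℝ) a, glim z * (z ^ β * ψ z))))) :=
    ((hQbconv.mul hPaconv).add (hQaconv.mul hPbconv)).const_mul k₁
  have h1' : Tendsto (fun n : ℕ => (n:ℝ) - a) atTop atTop := by
    have h1 := tendsto_atTop_add_const_right atTop (-a) (tendsto_natCast_atTop_atTop (R := ℝ))
    exact h1.congr fun n => by ring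
  have hDconv : Tendsto (fun n : ℕ => (2 * k₁ * C * (1 + a) * G * G) * ((n:ℝ) - a) ^ (β - 1))
      atTop (nhds 0) := by
    have h2 := (Tendsto.comp (tendsto_rpow_neg_atTop
      (show (0:ℝ) < 1 - β by linarith)) h1').const_mul (2 * k₁ * C * (1 + a) * G * G)
    rw [mul_zero] at h2
    refine h2.congr fun n => ?_
    simp only [Function.comp_apply]
    rw [show -(1 - β) = β - 1 by ring]
  have hEconv : Tendsto (fun n : ℕ =>
      (∫ z in Ioo (0:ℝ) a, B3n (PhiN k₁ α β (n:ℝ)) (n:ℝ) (g n) z * ψ z)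
        - k₁ * ((∫ z in Ioi (0:ℝ), g n z * z ^ β) * (∫ z in Ioo (0:ℝ) a, g n z * (z ^ α * ψ z))
          + (∫ z in Ioi (0:ℝ), g n z * z ^ α) * (∫ z in Ioo (0:ℝ) a, g n z * (z ^ β * ψ z))))
      atTop (nhds 0) :=
    squeeze_zero_norm' (hEbd.mono fun n h => by simpa [Real.norm_eq_abs] using h) hDconv
  rw [hT]
  have hfin := hEconv.add hGconv
  rw [zero_add] at hfin
  exact hfin.congr fun n => by ring
end
end

section
/- Let ν ≤ 0 and 0 < α < 1 satisfy ν − α > −1, and let P_ν(z|z₁;z₂) = (ν+2) z^ν / (z₁+z₂)^{ν+1} for 0 < z < z₁+z₂, zero otherwise. Then for every W > 0, every z₁ ∈ (0,W), every z₂ ∈ (0,z₁), and every measurable set U ⊆ (0,1): ∫₀^{z₁} χ_U(z) P_ν(z|z₁−z₂;z₂) dz ≤ (ν+2) ((1−α)/(ν+1−α))^{1−α} |U|^α z₁^{−α}, where |U| is the Lebesgue measure of U. In particular P_ν satisfies hypothesis (Γ₄) with Ω₁(δ) = (ν+2)((1−α)/(ν+1−α))^{1−α} δ^α. -/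
open MeasureTheory Set Filter

noncomputable section

lemma rpow_ioo_integral (ν m : ℝ) (hν : -1 < ν) (hm : 0 ≤ m) :
    ∫ z in Ioo (0:ℝ) m, z ^ ν = m ^ (ν + 1) / (ν + 1) := by
  rw [← MeasureTheory.integral_Ioc_eq_integral_Ioo,
    ← intervalIntegral.integral_of_le hm, integral_rpow (Or.inl hν),
    Real.zero_rpow (by linarith)]
  ring

lemma rearrange_bound (ν : ℝ) (hν : ν ≤ 0) (hν1 : -1 < ν) (z₁ : ℝ) (hz₁ : 0 < z₁)
    (A : Set ℝ) (hA : MeasurableSet A) (hsub : A ⊆ Ioo 0 z₁) :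
    ∫ z in A, z ^ ν ≤ ∫ z in Ioo (0:ℝ) ((volume A).toReal), z ^ ν := by
  have hfin : volume A ≠ ⊤ := by
    refine ne_top_of_le_ne_top ?_ (measure_mono hsub)
    simp [Real.volume_Ioo]
  set m := (volume A).toReal with hm
  have hm0 : 0 ≤ m := ENNReal.toReal_nonneg
  rcases hm0.eq_or_lt with hm0' | hmpos
  · have hA0 : volume A = 0 := by
      rw [← ENNReal.ofReal_toReal hfin, ← hm, ← hm0', ENNReal.ofReal_zero]
    rw [MeasureTheory.Measure.restrict_eq_zero.mpr hA0, MeasureTheory.integral_zero_measure, ← hm0']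
    simp
  have hmz : m ≤ z₁ := by
    have : volume A ≤ ENNReal.ofReal z₁ := by
      have h : volume A ≤ volume (Ioo 0 z₁) := measure_mono hsub
      rwa [Real.volume_Ioo, sub_zero] at h
    calc m ≤ (ENNReal.ofReal z₁).toReal := ENNReal.toReal_mono ENNReal.ofReal_ne_top this
    _ = z₁ := ENNReal.toReal_ofReal hz₁.le
  set I := Ioo (0:ℝ) m with hIdef
  have hImeas : MeasurableSet I := measurableSet_Ioo
  have hIsub : I ⊆ Ioo 0 z₁ := Ioo_subset_Ioo le_rfl hmz
  have hintz : IntegrableOn (fun z => z ^ ν) (Ioo (0:ℝ) z₁) volume := by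
    have := (intervalIntegral.intervalIntegrable_rpow' hν1 (a := 0) (b := z₁))
    exact (this.1).mono_set Ioo_subset_Ioc_self
  have hintA := hintz.mono_set hsub
  have hintI := hintz.mono_set hIsub
  have hvolI : volume I = volume A := by
    rw [hIdef, Real.volume_Ioo, sub_zero, hm, ENNReal.ofReal_toReal hfin]
  -- measure of the two difference pieces agree
  have hinterfin : volume (A ∩ I) ≠ ⊤ := ne_top_of_le_ne_top hfin (measure_mono inter_subset_left)
  have hmeq : volume (A \ I) = volume (I \ A) := by
    have k1 : volume (A ∩ I) + volume (A \ I) = volume A := measure_inter_add_diff A hImeas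
    have k2 : volume (I ∩ A) + volume (I \ A) = volume I := measure_inter_add_diff I hA
    rw [inter_comm, hvolI] at k2
    rw [← k2] at k1
    exact ((ENNReal.add_right_inj hinterfin).mp k1)
  have h1 := MeasureTheory.integral_inter_add_diff (μ := volume) (f := fun z : ℝ => z ^ ν) hImeas hintA
  have h2 := MeasureTheory.integral_inter_add_diff (μ := volume) (f := fun z : ℝ => z ^ ν) hA hintI
  rw [inter_comm] at h2
  have key : ∫ z in A \ I, z ^ ν ≤ ∫ z in I \ A, z ^ ν := by
    have hdfinA : volume (A \ I) ≠ ⊤ := ne_top_of_le_ne_top hfin (measure_mono diff_subset)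
    calc ∫ z in A \ I, z ^ ν ≤ ∫ _z in A \ I, m ^ ν := by
          refine setIntegral_mono_on (hintA.mono_set diff_subset) ?_ (hA.diff hImeas) ?_
          · exact integrableOn_const hdfinA
          · intro z hz
            have hz1 := hsub hz.1
            have hmle : m ≤ z := by
              by_contra hcon
              exact hz.2 ⟨hz1.1, lt_of_not_ge hcon⟩
            exact Real.rpow_le_rpow_of_nonpos hmpos hmle hν
      _ = (volume (A \ I)).toReal * m ^ ν := by rw [setIntegral_const]; simp [Measure.real]
      _ = (volume (I \ A)).toReal * m ^ ν := by rw [hmeq]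
      _ = ∫ _z in I \ A, m ^ ν := by rw [setIntegral_const]; simp [Measure.real]
      _ ≤ ∫ z in I \ A, z ^ ν := by
          refine setIntegral_mono_on ?_ (hintI.mono_set diff_subset) (hImeas.diff hA) ?_
          · exact integrableOn_const (ne_top_of_le_ne_top (by rw [hvolI]; exact hfin) (measure_mono diff_subset))
          · intro z hz
            exact Real.rpow_le_rpow_of_nonpos hz.1.1 hz.1.2.le hν
  linarith [h1, h2, key]

/-- The power-law fragment distribution `P_ν` satisfies hypothesis (Γ₄)
with `Ω₁(δ) = (ν+2)((1−α)/(ν+1−α))^{1−α} δ^α`. -/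
theorem Pnu_satisfies_Gamma4
    (ν α : ℝ) (hν : ν ≤ 0) (hα0 : 0 < α) (hα1 : α < 1) (hνα : -1 < ν - α)
    (W : ℝ) (hW : 0 < W) (z₁ : ℝ) (hz₁ : z₁ ∈ Ioo (0:ℝ) W)
    (z₂ : ℝ) (hz₂ : z₂ ∈ Ioo (0:ℝ) z₁)
    (U : Set ℝ) (hU : MeasurableSet U) (hU1 : U ⊆ Ioo 0 1) :
    (∫ z in Ioo (0:ℝ) z₁, U.indicator (fun _ => (1:ℝ)) z * Pnu ν z (z₁ - z₂) z₂)
      ≤ (ν + 2) * ((1 - α) / (ν + 1 - α)) ^ (1 - α) * (volume U).toReal ^ α * z₁ ^ (-α) := by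
  obtain ⟨hz₁0, hz₁W⟩ := hz₁
  obtain ⟨hz₂0, hz₂1⟩ := hz₂
  have hν1 : -1 < ν := by linarith
  have hνα1 : 0 < ν + 1 - α := by linarith
  have hν2 : 0 < ν + 2 := by linarith
  have h1α : 0 < 1 - α := by linarith
  have hν10 : 0 < ν + 1 := by linarith
  have hz₁ν : 0 < z₁ ^ (ν + 1) := Real.rpow_pos_of_pos hz₁0 _
  set A := Ioo (0:ℝ) z₁ ∩ U with hAdef
  have hAm : MeasurableSet A := measurableSet_Ioo.inter hU
  have hAsub : A ⊆ Ioo 0 z₁ := inter_subset_left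
  set m := (volume A).toReal with hmdef
  set u := (volume U).toReal with hudef
  have hm0 : 0 ≤ m := ENNReal.toReal_nonneg
  have hu0 : 0 ≤ u := ENNReal.toReal_nonneg
  have hUfin : volume U ≠ ⊤ := by
    refine ne_top_of_le_ne_top ?_ (measure_mono hU1)
    simp [Real.volume_Ioo]
  have hAfin : volume A ≠ ⊤ :=
    ne_top_of_le_ne_top hUfin (measure_mono inter_subset_right)
  have hmu : m ≤ u := ENNReal.toReal_mono hUfin (measure_mono inter_subset_right)
  have hmz₁ : m ≤ z₁ := by
    have h : volume A ≤ volume (Ioo 0 z₁) := measure_mono hAsub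
    rw [Real.volume_Ioo, sub_zero] at h
    calc m ≤ (ENNReal.ofReal z₁).toReal := ENNReal.toReal_mono ENNReal.ofReal_ne_top h
      _ = z₁ := ENNReal.toReal_ofReal hz₁0.le
  -- Step 1: rewrite the integral
  have step1 : (∫ z in Ioo (0:ℝ) z₁, U.indicator (fun _ => (1:ℝ)) z * Pnu ν z (z₁ - z₂) z₂)
      = (ν + 2) / z₁ ^ (ν + 1) * ∫ z in A, z ^ ν := by
    have hcong : ∀ z ∈ Ioo (0:ℝ) z₁,
        U.indicator (fun _ => (1:ℝ)) z * Pnu ν z (z₁ - z₂) z₂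
          = U.indicator (fun w => (ν + 2) / z₁ ^ (ν + 1) * w ^ ν) z := by
      intro z hz
      have hsum : z₁ - z₂ + z₂ = z₁ := by ring
      by_cases hzU : z ∈ U
      · simp only [indicator_of_mem hzU, Pnu, hsum, one_mul]
        rw [if_pos ⟨hz.1, hz.2⟩]
        ring
      · simp [indicator_of_notMem hzU]
    rw [setIntegral_congr_fun measurableSet_Ioo hcong, setIntegral_indicator hU,
      MeasureTheory.integral_const_mul]
  -- Step 2: rearrangement bound
  have step2 : ∫ z in A, z ^ ν ≤ m ^ (ν + 1) / (ν + 1) := by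
    calc ∫ z in A, z ^ ν ≤ ∫ z in Ioo (0:ℝ) m, z ^ ν :=
          rearrange_bound ν hν hν1 z₁ hz₁0 A hAm hAsub
      _ = m ^ (ν + 1) / (ν + 1) := rpow_ioo_integral ν m hν1 hm0
  -- Step 3: constant comparison  1/(ν+1) ≤ ((1-α)/(ν+1-α))^(1-α)
  have hC : 1 / (ν + 1) ≤ ((1 - α) / (ν + 1 - α)) ^ (1 - α) := by
    set y := (ν + 1 - α) / (1 - α) with hy
    have hy0 : 0 < y := by positivity
    have hgm : y ^ (1 - α) * (1:ℝ) ^ α ≤ (1 - α) * y + α * 1 :=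
      Real.geom_mean_le_arith_mean2_weighted h1α.le hα0.le hy0.le zero_le_one (by ring)
    have h2 : y ^ (1 - α) ≤ ν + 1 := by
      rw [Real.one_rpow, mul_one, mul_one] at hgm
      calc y ^ (1 - α) ≤ (1 - α) * y + α := hgm
        _ = ν + 1 := by rw [hy]; field_simp; ring
    have hCy : ((1 - α) / (ν + 1 - α)) ^ (1 - α) = (y ^ (1 - α))⁻¹ := by
      rw [← Real.inv_rpow hy0.le]
      congr 1
      rw [hy]
      field_simp
    rw [hCy, one_div]
    exact inv_anti₀ (Real.rpow_pos_of_pos hy0 _) h2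
  have hCpos : 0 < ((1 - α) / (ν + 1 - α)) ^ (1 - α) :=
    Real.rpow_pos_of_pos (by positivity) _
  -- Step 4: chain of inequalities
  have step4 : m ^ (ν + 1) / (ν + 1)
      ≤ ((1 - α) / (ν + 1 - α)) ^ (1 - α) * u ^ α * z₁ ^ (ν + 1 - α) := by
    have e1 : m ^ (ν + 1) = m ^ α * m ^ (ν + 1 - α) := by
      rw [← Real.rpow_add' hm0 (by intro h; linarith [h])]
      ring_nf
    have hb1 : m ^ α ≤ u ^ α := Real.rpow_le_rpow hm0 hmu hα0.le
    have hb2 : m ^ (ν + 1 - α) ≤ z₁ ^ (ν + 1 - α) :=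
      Real.rpow_le_rpow hm0 hmz₁ hνα1.le
    have hnn1 : 0 ≤ m ^ α := Real.rpow_nonneg hm0 _
    have hnn2 : 0 ≤ u ^ α := Real.rpow_nonneg hu0 _
    have hnn3 : 0 ≤ z₁ ^ (ν + 1 - α) := Real.rpow_nonneg hz₁0.le _
    have hnn4 : 0 ≤ (1:ℝ) / (ν + 1) := by positivity
    calc m ^ (ν + 1) / (ν + 1) = m ^ α * m ^ (ν + 1 - α) * (1 / (ν + 1)) := by
          rw [e1]; ring
      _ ≤ u ^ α * z₁ ^ (ν + 1 - α) * (((1 - α) / (ν + 1 - α)) ^ (1 - α)) := by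
          apply mul_le_mul _ hC hnn4 (by positivity)
          exact mul_le_mul hb1 hb2 (Real.rpow_nonneg hm0 _) hnn2
      _ = _ := by ring
  rw [step1]
  calc (ν + 2) / z₁ ^ (ν + 1) * ∫ z in A, z ^ ν
      ≤ (ν + 2) / z₁ ^ (ν + 1) * (m ^ (ν + 1) / (ν + 1)) :=
        mul_le_mul_of_nonneg_left step2 (div_nonneg hν2.le hz₁ν.le)
    _ ≤ (ν + 2) / z₁ ^ (ν + 1)
          * (((1 - α) / (ν + 1 - α)) ^ (1 - α) * u ^ α * z₁ ^ (ν + 1 - α)) :=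
        mul_le_mul_of_nonneg_left step4 (div_nonneg hν2.le hz₁ν.le)
    _ = (ν + 2) * ((1 - α) / (ν + 1 - α)) ^ (1 - α) * u ^ α * z₁ ^ (-α) := by
        have e : z₁ ^ (ν + 1 - α) = z₁ ^ (ν + 1) * z₁ ^ (-α) := by
          rw [← Real.rpow_add hz₁0, sub_eq_add_neg]
        rw [e]
        field_simp
end
end

section
/- Let T > 0, g₀ ∈ S⁺, and assume (Γ₁)–(Γ₅). For n ≥ 1 let gⁿ be the nonnegative mass-conserving solution of the truncated coagulation–collisional breakage system on [0,T]. Fix a > 0, t ∈ [0,T], and let g ∈ S⁺ be such that ∫₀^∞ (1+z)gⁿ(z,s) dz ≤ G(T) for all s ∈ [0,t]. Then for every ψ ∈ L^∞(0,a), | ∫₀^a ψ(z) [ (C₁ⁿ − B₃ⁿ + B₁ⁿ)(gⁿ)(z,s) − (C₁ − B₃ + B₁)(g)(z,s) ] dz | ≤ k₁ ‖ψ‖_{L^∞(0,a)} [ G(T)² (3+N) + ‖g(·,s)‖²_{L¹((1+z)dz)} (5+N) ] for every s ∈ [0,t]; in particular this difference of operators is uniformly dominated in L¹((0,a)) independently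 of n. -/
open MeasureTheory Set Filter
open scoped ENNReal

noncomputable section

lemma rpow_le_one_add {x γ : ℝ} (hx : 0 < x) (hγ0 : 0 ≤ γ) (hγ1 : γ ≤ 1) :
    x ^ γ ≤ 1 + x := by
  rcases le_or_gt x 1 with h | h
  · have h2 := Real.rpow_le_one hx.le h hγ0
    linarith
  · have h1 : x ^ γ ≤ x ^ (1:ℝ) := Real.rpow_le_rpow_of_exponent_le h.le hγ1
    rw [Real.rpow_one] at h1; linarith

lemma Phi_nonneg {k₁ α β x y : ℝ} (hk : 0 ≤ k₁) (hx : 0 < x) (hy : 0 < y) :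
    0 ≤ Phi k₁ α β x y := by
  unfold Phi
  have h1 := Real.rpow_nonneg hx.le α
  have h2 := Real.rpow_nonneg hy.le β
  have h3 := Real.rpow_nonneg hy.le α
  have h4 := Real.rpow_nonneg hx.le β
  positivity

lemma Phi_le {k₁ α β x y : ℝ} (hk : 0 ≤ k₁) (hα : 0 < α) (hαβ : α ≤ β) (hβ : β < 1)
    (hx : 0 < x) (hy : 0 < y) : Phi k₁ α β x y ≤ 2 * k₁ * ((1 + x) * (1 + y)) := by
  have hα1 : α ≤ 1 := le_of_lt (lt_of_le_of_lt hαβ hβ)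
  have h1 : x ^ α ≤ 1 + x := rpow_le_one_add hx hα.le hα1
  have h2 : y ^ β ≤ 1 + y := rpow_le_one_add hy (hα.le.trans hαβ) hβ.le
  have h3 : y ^ α ≤ 1 + y := rpow_le_one_add hy hα.le hα1
  have h4 : x ^ β ≤ 1 + x := rpow_le_one_add hx (hα.le.trans hαβ) hβ.le
  have p1 : x ^ α * y ^ β ≤ (1+x)*(1+y) :=
    mul_le_mul h1 h2 (Real.rpow_nonneg hy.le β) (by positivity)
  have p2 : y ^ α * x ^ β ≤ (1+y)*(1+x) :=
    mul_le_mul h3 h4 (Real.rpow_nonneg hx.le β) (by positivity)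
  unfold Phi
  nlinarith

lemma PhiN_nonneg {k₁ α β n x y : ℝ} (hk : 0 ≤ k₁) (hx : 0 < x) (hy : 0 < y) :
    0 ≤ PhiN k₁ α β n x y := by
  unfold PhiN
  exact mul_nonneg (Set.indicator_nonneg (fun _ _ => zero_le_one) _) (Phi_nonneg hk hx hy)

lemma PhiN_le {k₁ α β n x y : ℝ} (hk : 0 ≤ k₁) (hα : 0 < α) (hαβ : α ≤ β) (hβ : β < 1)
    (hx : 0 < x) (hy : 0 < y) : PhiN k₁ α β n x y ≤ 2 * k₁ * ((1 + x) * (1 + y)) := by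
  have hind : (Ioo (0:ℝ) n).indicator (fun _ => (1:ℝ)) (x + y) ≤ 1 := by
    unfold Set.indicator; split <;> norm_num
  have := Phi_nonneg (k₁ := k₁) (α := α) (β := β) hk hx hy
  calc PhiN k₁ α β n x y ≤ 1 * Phi k₁ α β x y := by
        unfold PhiN; exact mul_le_mul_of_nonneg_right hind this
    _ = Phi k₁ α β x y := one_mul _
    _ ≤ _ := Phi_le hk hα hαβ hβ hx hy

lemma ofReal_norm_integral_le (f : ℝ → ℝ) (μ : Measure ℝ) :
    ENNReal.ofReal ‖∫ x, f x ∂μ‖ ≤ ∫⁻ x, ENNReal.ofReal ‖f x‖ ∂μ :=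
  le_trans (ENNReal.ofReal_le_ofReal (norm_integral_le_lintegral_norm f))
    ENNReal.ofReal_toReal_le

/-- indicator of the triangle `0 < z₁ < z`, as function of `(z, z₁)`. -/
def trif (f : ℝ → ℝ → ℝ≥0∞) : ℝ × ℝ → ℝ≥0∞ :=
  fun p => if 0 < p.2 ∧ p.2 < p.1 then f p.1 p.2 else 0

lemma trif_meas {f : ℝ → ℝ → ℝ≥0∞} (hf : Measurable (Function.uncurry f)) :
    Measurable (trif f) := by
  unfold trif
  exact Measurable.ite
    ((measurableSet_lt measurable_const measurable_snd).inter
      (measurableSet_lt measurable_snd measurable_fst)) hf measurable_const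

lemma lint_Ioo_eq_trif (f : ℝ → ℝ → ℝ≥0∞) (z : ℝ) :
    ∫⁻ z₁ in Ioo (0:ℝ) z, f z z₁ = ∫⁻ z₁, trif f (z, z₁) := by
  rw [← lintegral_indicator measurableSet_Ioo]
  refine lintegral_congr fun z₁ => ?_
  by_cases h : z₁ ∈ Ioo (0:ℝ) z
  · rw [Set.indicator_of_mem h]
    simp only [trif, mem_Ioo] at *
    rw [if_pos h]
  · rw [Set.indicator_of_notMem h]
    simp only [trif, mem_Ioo] at *
    rw [if_neg h]

lemma lint_Ioi_eq_trif (f : ℝ → ℝ → ℝ≥0∞) (z₁ : ℝ) (h : 0 < z₁) :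
    ∫⁻ z in Ioi z₁, f z z₁ = ∫⁻ z, trif f (z, z₁) := by
  rw [← lintegral_indicator measurableSet_Ioi]
  refine lintegral_congr fun z => ?_
  by_cases hz : z ∈ Ioi z₁
  · rw [Set.indicator_of_mem hz]
    simp only [trif]
    rw [if_pos ⟨h, hz⟩]
  · rw [Set.indicator_of_notMem hz]
    simp only [trif]
    rw [if_neg (fun hc => hz hc.2)]

lemma swap_A (f : ℝ → ℝ → ℝ≥0∞) (hf : Measurable (Function.uncurry f)) :
    ∫⁻ z in Ioi (0:ℝ), ∫⁻ z₁ in Ioo (0:ℝ) z, f z z₁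
      = ∫⁻ z₁ in Ioi (0:ℝ), ∫⁻ z in Ioi z₁, f z z₁ := by
  have h1 : ∫⁻ z in Ioi (0:ℝ), ∫⁻ z₁ in Ioo (0:ℝ) z, f z z₁
      = ∫⁻ z, ∫⁻ z₁, trif f (z, z₁) := by
    rw [← lintegral_indicator measurableSet_Ioi]
    refine lintegral_congr fun z => ?_
    by_cases hz : z ∈ Ioi (0:ℝ)
    · rw [Set.indicator_of_mem hz, lint_Ioo_eq_trif]
    · rw [Set.indicator_of_notMem hz]
      have hzero : ∀ z₁ : ℝ, trif f (z, z₁) = 0 := fun z₁ => by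
        simp only [trif]
        rw [if_neg]
        rintro ⟨h01, h1z⟩
        exact hz (mem_Ioi.2 (h01.trans h1z))
      simp [hzero]
  have h2 : Measurable (Function.uncurry fun z z₁ => trif f (z, z₁)) := trif_meas hf
  rw [h1, lintegral_lintegral_swap h2.aemeasurable]
  rw [← lintegral_indicator measurableSet_Ioi]
  refine lintegral_congr fun z₁ => ?_
  by_cases hz : z₁ ∈ Ioi (0:ℝ)
  · rw [Set.indicator_of_mem hz, lint_Ioi_eq_trif f z₁ hz]
  · rw [Set.indicator_of_notMem hz]
    have hzero : ∀ z : ℝ, trif f (z, z₁) = 0 := fun z => by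
      simp only [trif]
      rw [if_neg]
      rintro ⟨h01, _⟩
      exact hz (mem_Ioi.2 h01)
    simp [hzero]

/-- indicator of the triangle `0 < z < z₁`, as function of `(z, z₁)`. -/
def trif' (f : ℝ → ℝ → ℝ≥0∞) : ℝ × ℝ → ℝ≥0∞ :=
  fun p => if 0 < p.1 ∧ p.1 < p.2 then f p.1 p.2 else 0

lemma trif'_meas {f : ℝ → ℝ → ℝ≥0∞} (hf : Measurable (Function.uncurry f)) :
    Measurable (trif' f) := by
  unfold trif'
  exact Measurable.ite
    ((measurableSet_lt measurable_const measurable_fst).inter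
      (measurableSet_lt measurable_fst measurable_snd)) hf measurable_const

lemma swap_B (f : ℝ → ℝ → ℝ≥0∞) (hf : Measurable (Function.uncurry f)) :
    ∫⁻ z in Ioi (0:ℝ), ∫⁻ z₁ in Ioi z, f z z₁
      = ∫⁻ z₁ in Ioi (0:ℝ), ∫⁻ z in Ioo (0:ℝ) z₁, f z z₁ := by
  have h1 : ∫⁻ z in Ioi (0:ℝ), ∫⁻ z₁ in Ioi z, f z z₁
      = ∫⁻ z, ∫⁻ z₁, trif' f (z, z₁) := by
    rw [← lintegral_indicator measurableSet_Ioi]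
    refine lintegral_congr fun z => ?_
    by_cases hz : z ∈ Ioi (0:ℝ)
    · rw [Set.indicator_of_mem hz, ← lintegral_indicator measurableSet_Ioi]
      refine lintegral_congr fun z₁ => ?_
      by_cases h : z₁ ∈ Ioi z
      · rw [Set.indicator_of_mem h]
        simp only [trif']
        rw [if_pos ⟨hz, h⟩]
      · rw [Set.indicator_of_notMem h]
        simp only [trif']
        rw [if_neg (fun hc => h hc.2)]
    · rw [Set.indicator_of_notMem hz]
      have hzero : ∀ z₁ : ℝ, trif' f (z, z₁) = 0 := fun z₁ => by
        simp only [trif']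
        rw [if_neg]
        rintro ⟨h01, _⟩
        exact hz (mem_Ioi.2 h01)
      simp [hzero]
  have h2 : Measurable (Function.uncurry fun z z₁ => trif' f (z, z₁)) := trif'_meas hf
  rw [h1, lintegral_lintegral_swap h2.aemeasurable]
  rw [← lintegral_indicator measurableSet_Ioi]
  refine lintegral_congr fun z₁ => ?_
  by_cases hz : z₁ ∈ Ioi (0:ℝ)
  · rw [Set.indicator_of_mem hz]
    symm
    rw [← lintegral_indicator measurableSet_Ioo]
    refine lintegral_congr fun z => ?_
    by_cases h : z ∈ Ioo (0:ℝ) z₁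
    · rw [Set.indicator_of_mem h]
      simp only [trif', mem_Ioo] at *
      rw [if_pos h]
    · rw [Set.indicator_of_notMem h]
      simp only [trif', mem_Ioo] at *
      rw [if_neg h]
  · rw [Set.indicator_of_notMem hz]
    have hzero : ∀ z : ℝ, trif' f (z, z₁) = 0 := fun z => by
      simp only [trif']
      rw [if_neg]
      rintro ⟨h01, hlt⟩
      exact hz (mem_Ioi.2 (h01.trans hlt))
    simp [hzero]
lemma lint_shift (φ : ℝ → ℝ≥0∞) (hφ : Measurable φ) (c : ℝ) :
    ∫⁻ z in Ioi c, φ (z - c) = ∫⁻ y in Ioi (0:ℝ), φ y := by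
  have hmp : MeasurePreserving (fun y : ℝ => y + c) volume volume :=
    measurePreserving_add_right volume c
  have hm1 : Measurable fun z : ℝ => φ (z - c) := by fun_prop
  calc ∫⁻ z in Ioi c, φ (z - c) ∂volume
      = ∫⁻ z in Ioi c, φ (z - c) ∂(Measure.map (fun y : ℝ => y + c) volume) := by
        rw [hmp.map_eq]
    _ = ∫⁻ y in (fun y : ℝ => y + c) ⁻¹' (Ioi c), φ (y + c - c) ∂volume :=
        setLIntegral_map measurableSet_Ioi hm1 (measurable_id.add_const c)
    _ = ∫⁻ y in Ioi (0:ℝ), φ y := by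
        congr 1
        · ext y; simp
        · funext y; congr 1; ring

lemma tri_lintegral {φ : ℝ → ℝ≥0∞} (hφ : Measurable φ) :
    ∫⁻ z in Ioi (0:ℝ), ∫⁻ z₁ in Ioo (0:ℝ) z, φ (z - z₁) * φ z₁
      ≤ (∫⁻ y in Ioi (0:ℝ), φ y) * (∫⁻ y in Ioi (0:ℝ), φ y) := by
  have hfm : Measurable (Function.uncurry fun z z₁ : ℝ => φ (z - z₁) * φ z₁) := by
    apply Measurable.mul
    · exact hφ.comp (measurable_fst.sub measurable_snd)
    · exact hφ.comp measurable_snd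
  rw [swap_A _ hfm]
  refine le_of_eq ?_
  calc ∫⁻ z₁ in Ioi (0:ℝ), ∫⁻ z in Ioi z₁, φ (z - z₁) * φ z₁
      = ∫⁻ z₁ in Ioi (0:ℝ), (∫⁻ y in Ioi (0:ℝ), φ y) * φ z₁ := by
        refine setLIntegral_congr_fun_ae measurableSet_Ioi (Filter.Eventually.of_forall ?_)
        intro z₁ _
        have hm1 : AEMeasurable (fun z : ℝ => φ (z - z₁)) (volume.restrict (Ioi z₁)) := by
          fun_prop
        rw [lintegral_mul_const'' _ hm1, lint_shift φ hφ z₁]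
    _ = (∫⁻ y in Ioi (0:ℝ), φ y) * (∫⁻ y in Ioi (0:ℝ), φ y) :=
        lintegral_const_mul'' _ hφ.aemeasurable
/-- Integral bound on `P` coming from (Γ₅), `hPmass` and `hPnum`. -/
lemma P_lint (P : ℝ → ℝ → ℝ → ℝ) (N : ℝ)
    (hPmeas : Measurable fun p : ℝ × ℝ × ℝ => P p.1 p.2.1 p.2.2)
    (hPnn : ∀ z z₁ z₂, 0 ≤ P z z₁ z₂)
    (hPnum : ∀ z₁ z₂, 0 < z₁ → 0 < z₂ → (∫ z in Ioo (0:ℝ) (z₁ + z₂), P z z₁ z₂) = N)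
    (hPmass : ∀ z₁ z₂, 0 < z₁ → 0 < z₂ → (∫ z in Ioo (0:ℝ) (z₁ + z₂), z * P z z₁ z₂) = z₁ + z₂)
    (hΓ₅ : ∀ W > (0:ℝ), ∃ kW > (0:ℝ), ∃ τ₂ : ℝ, 0 ≤ τ₂ ∧ τ₂ < 1 ∧
      ∀ z₁ z₂ : ℝ, 0 < z₁ → 0 < z₂ → W < z₁ + z₂ →
        ∀ z ∈ Ioo (0:ℝ) W, P z z₁ z₂ ≤ kW * z ^ (-τ₂))
    {y₁ y₂ : ℝ} (hy₁ : 0 < y₁) (hy₂ : 0 < y₂) :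
    ∫⁻ z in Ioo (0:ℝ) (y₁ + y₂), ENNReal.ofReal (P z y₁ y₂) ≤ ENNReal.ofReal N := by
  set S := y₁ + y₂ with hSdef
  have hS0 : 0 < S := by positivity
  have hmeas : Measurable (fun z => P z y₁ y₂) := by
    have := hPmeas.comp ((measurable_id (α := ℝ)).prodMk
      (measurable_const (a := (y₁, y₂))))
    exact this
  have hzP : IntegrableOn (fun z => z * P z y₁ y₂) (Ioo 0 S) volume := by
    by_contra h
    have h2 := hPmass y₁ y₂ hy₁ hy₂
    rw [integral_undef h] at h2
    linarith
  have hI2 : IntegrableOn (fun z => P z y₁ y₂) (Ioo (S/2) S) volume := by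
    have hsub : Ioo (S/2) S ⊆ Ioo 0 S := fun x hx => ⟨lt_trans (by linarith) hx.1, hx.2⟩
    have h1 : IntegrableOn (fun z => (2/S) * (z * P z y₁ y₂)) (Ioo (S/2) S) volume :=
      (hzP.mono_set hsub).const_mul _
    refine Integrable.mono' h1 hmeas.aestronglyMeasurable ?_
    filter_upwards [ae_restrict_mem measurableSet_Ioo] with z hz
    rw [Real.norm_eq_abs, abs_of_nonneg (hPnn _ _ _)]
    have h2 : 1 ≤ (2/S) * z := by
      rw [div_mul_eq_mul_div, le_div_iff₀ hS0]
      nlinarith [hz.1]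
    calc P z y₁ y₂ = 1 * P z y₁ y₂ := (one_mul _).symm
      _ ≤ ((2/S) * z) * P z y₁ y₂ := mul_le_mul_of_nonneg_right h2 (hPnn _ _ _)
      _ = (2/S) * (z * P z y₁ y₂) := by ring
  obtain ⟨kW, hkW, τ, hτ0, hτ1, hbd⟩ := hΓ₅ (3*S/4) (by positivity)
  have hI1 : IntegrableOn (fun z => P z y₁ y₂) (Ioo 0 (3*S/4)) volume := by
    have hrint : IntegrableOn (fun z : ℝ => kW * z ^ (-τ)) (Ioo 0 (3*S/4)) volume := by
      apply Integrable.const_mul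
      have h3 : IntervalIntegrable (fun x : ℝ => x ^ (-τ)) volume 0 (3*S/4) :=
        intervalIntegral.intervalIntegrable_rpow' (by linarith)
      rw [intervalIntegrable_iff_integrableOn_Ioo_of_le (by positivity)] at h3
      exact h3
    refine Integrable.mono' hrint hmeas.aestronglyMeasurable ?_
    filter_upwards [ae_restrict_mem measurableSet_Ioo] with z hz
    rw [Real.norm_eq_abs, abs_of_nonneg (hPnn _ _ _)]
    exact hbd y₁ y₂ hy₁ hy₂ (by rw [← hSdef]; linarith) z hz
  have hint : IntegrableOn (fun z => P z y₁ y₂) (Ioo 0 S) volume := by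
    refine (hI1.union hI2).mono_set ?_
    intro x hx
    rcases lt_or_ge x (3*S/4) with h | h
    · exact Or.inl ⟨hx.1, h⟩
    · exact Or.inr ⟨by linarith, hx.2⟩
  have heq : ENNReal.ofReal (∫ z in Ioo (0:ℝ) S, P z y₁ y₂)
      = ∫⁻ z in Ioo (0:ℝ) S, ENNReal.ofReal (P z y₁ y₂) :=
    ofReal_integral_eq_lintegral_ofReal hint
      (Filter.Eventually.of_forall fun z => hPnn _ _ _)
  rw [← heq, hPnum y₁ y₂ hy₁ hy₂]


/-- a.e. statements transfer along the reflection `x ↦ c - x`. -/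
lemma ae_reflect {p : ℝ → Prop} (h : ∀ᵐ x ∂(volume : Measure ℝ), p x) (c : ℝ) :
    ∀ᵐ x ∂(volume : Measure ℝ), p (c - x) := by
  have hmp : MeasurePreserving (fun x : ℝ => c - x) volume volume :=
    Measure.measurePreserving_sub_left volume c
  have ht : Tendsto (fun x : ℝ => c - x) (ae volume) (ae volume) := by
    have h2 := MeasureTheory.Measure.tendsto_ae_map (μ := volume) hmp.measurable.aemeasurable
    rwa [hmp.map_eq] at h2
  exact ht.eventually h

section congr_lemmas

variable {w w' : ℝ → ℝ}

def AEeq (w w' : ℝ → ℝ) : Prop := ∀ᵐ x ∂(volume : Measure ℝ), x ∈ Ioi (0:ℝ) → w x = w' x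

lemma restrict_eq_of_subset (hww' : AEeq w w') {S : Set ℝ} (hS : S ⊆ Ioi (0:ℝ)) :
    ∀ᵐ x ∂(volume.restrict S), w x = w' x := by
  have h1 : ∀ᵐ x ∂(volume.restrict (Ioi (0:ℝ))), w x = w' x :=
    (ae_restrict_iff' measurableSet_Ioi).2 hww'
  exact Eventually.filter_mono (ae_mono (Measure.restrict_mono hS le_rfl)) h1

lemma reflect_eq_on_Ioo (hww' : AEeq w w') (c : ℝ) :
    ∀ᵐ x ∂(volume.restrict (Ioo (0:ℝ) c)), w (c - x) = w' (c - x) := by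
  have h1 : ∀ᵐ x ∂(volume : Measure ℝ), c - x ∈ Ioi (0:ℝ) → w (c - x) = w' (c - x) :=
    ae_reflect hww' c
  rw [ae_restrict_iff' measurableSet_Ioo]
  filter_upwards [h1] with x hx hxm
  exact hx (by simp only [mem_Ioi]; linarith [hxm.2])

lemma C1_congr (hww' : AEeq w w') (E Φ' : ℝ → ℝ → ℝ) (z : ℝ) :
    C1 E Φ' w z = C1 E Φ' w' z := by
  unfold C1
  congr 1
  refine integral_congr_ae ?_
  filter_upwards [restrict_eq_of_subset hww' (Ioo_subset_Ioi_self),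
    reflect_eq_on_Ioo hww' z] with z₁ e1 e2
  rw [e1, e2]

lemma B3_core_congr (hww' : AEeq w w') (Φ' : ℝ → ℝ → ℝ) {S : Set ℝ} (hS : S ⊆ Ioi (0:ℝ)) {z : ℝ}
    (hz : w z = w' z) :
    ∫ z₁ in S, Φ' z z₁ * w z * w z₁ = ∫ z₁ in S, Φ' z z₁ * w' z * w' z₁ := by
  refine integral_congr_ae ?_
  filter_upwards [restrict_eq_of_subset hww' hS] with z₁ e1
  rw [e1, hz]

lemma B1_core_congr (hww' : AEeq w w') (P : ℝ → ℝ → ℝ → ℝ) (E Φ' : ℝ → ℝ → ℝ) (z z₁ : ℝ) :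
    (∫ z₂ in Ioo (0:ℝ) z₁,
        P z (z₁ - z₂) z₂ * (1 - E (z₁ - z₂) z₂) * Φ' (z₁ - z₂) z₂ * w (z₁ - z₂) * w z₂)
      = ∫ z₂ in Ioo (0:ℝ) z₁,
        P z (z₁ - z₂) z₂ * (1 - E (z₁ - z₂) z₂) * Φ' (z₁ - z₂) z₂ * w' (z₁ - z₂) * w' z₂ := by
  refine integral_congr_ae ?_
  filter_upwards [restrict_eq_of_subset hww' (Ioo_subset_Ioi_self),
    reflect_eq_on_Ioo hww' z₁] with z₂ e1 e2
  rw [e1, e2]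

lemma B1_congr (hww' : AEeq w w') (P : ℝ → ℝ → ℝ → ℝ) (E Φ' : ℝ → ℝ → ℝ) (z : ℝ) :
    B1 P E Φ' w z = B1 P E Φ' w' z := by
  unfold B1
  congr 1
  refine integral_congr_ae (Filter.Eventually.of_forall fun z₁ => ?_)
  exact B1_core_congr hww' P E Φ' z z₁

lemma B1n_congr (hww' : AEeq w w') (P : ℝ → ℝ → ℝ → ℝ) (E Φ' : ℝ → ℝ → ℝ) (n z : ℝ) :
    B1n P E Φ' n w z = B1n P E Φ' n w' z := by
  unfold B1n
  congr 1
  refine integral_congr_ae (Filter.Eventually.of_forall fun z₁ => ?_)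
  exact B1_core_congr hww' P E Φ' z z₁

lemma B3_congr (hww' : AEeq w w') (Φ' : ℝ → ℝ → ℝ) {z : ℝ} (hz : w z = w' z) :
    B3 Φ' w z = B3 Φ' w' z :=
  B3_core_congr hww' Φ' (fun _ h => h) hz

lemma B3n_congr (hww' : AEeq w w') (Φ' : ℝ → ℝ → ℝ) (n : ℝ) {z : ℝ} (hz : w z = w' z) :
    B3n Φ' n w z = B3n Φ' n w' z :=
  B3_core_congr hww' Φ' (Ioo_subset_Ioi_self) hz

end congr_lemmas

section opbounds

variable {k₁ : ℝ} {E Φ' : ℝ → ℝ → ℝ} {w : ℝ → ℝ}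

lemma phi_meas (hwm : Measurable w) :
    Measurable (fun y => ENNReal.ofReal ((1 + y) * w y)) :=
  ((measurable_const.add measurable_id).mul hwm).ennreal_ofReal

lemma opC1_bound (hk : 0 ≤ k₁)
    (hE0 : ∀ x y, 0 ≤ E x y) (hE1 : ∀ x y, E x y ≤ 1)
    (hΦ0 : ∀ x y, 0 < x → 0 < y → 0 ≤ Φ' x y)
    (hΦb : ∀ x y, 0 < x → 0 < y → Φ' x y ≤ 2 * k₁ * ((1 + x) * (1 + y)))
    (hwm : Measurable w) (hw0 : ∀ y, 0 ≤ w y) :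
    ∃ H : ℝ → ℝ≥0∞, Measurable H ∧ (∀ z, ENNReal.ofReal ‖C1 E Φ' w z‖ ≤ H z) ∧
      ∫⁻ z in Ioi (0:ℝ), H z ≤ ENNReal.ofReal k₁ *
        ((∫⁻ y in Ioi (0:ℝ), ENNReal.ofReal ((1 + y) * w y))
          * (∫⁻ y in Ioi (0:ℝ), ENNReal.ofReal ((1 + y) * w y))) := by
  set φ : ℝ → ℝ≥0∞ := fun y => ENNReal.ofReal ((1 + y) * w y) with hφdef
  have hφm : Measurable φ := phi_meas hwm
  set Kf : ℝ → ℝ → ℝ≥0∞ :=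
    fun z z₁ => ENNReal.ofReal (2 * k₁) * (φ (z - z₁) * φ z₁) with hKf
  have hKm : Measurable (Function.uncurry Kf) := by
    refine Measurable.mul (f := fun _ : ℝ × ℝ => ENNReal.ofReal (2 * k₁))
      (g := fun p : ℝ × ℝ => φ (p.1 - p.2) * φ p.2) measurable_const ?_
    exact ((hφm.comp (measurable_fst.sub measurable_snd)).mul (hφm.comp measurable_snd))
  refine ⟨fun z => ENNReal.ofReal (1/2) * ∫⁻ z₁, trif Kf (z, z₁), ?_, ?_, ?_⟩
  · exact (Measurable.lintegral_prod_right' (trif_meas hKm)).const_mul _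
  · intro z
    have hb : ∀ z₁ ∈ Ioo (0:ℝ) z,
        ENNReal.ofReal ‖E (z - z₁) z₁ * Φ' (z - z₁) z₁ * w (z - z₁) * w z₁‖ ≤ Kf z z₁ := by
      intro z₁ hz₁
      have hx : 0 < z - z₁ := by linarith [hz₁.2]
      have hy : 0 < z₁ := hz₁.1
      have hnn : 0 ≤ E (z - z₁) z₁ * Φ' (z - z₁) z₁ * w (z - z₁) * w z₁ := by
        have := hΦ0 _ _ hx hy
        have := hE0 (z - z₁) z₁
        have := hw0 (z - z₁); have := hw0 z₁
        positivity
      rw [Real.norm_eq_abs, abs_of_nonneg hnn]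
      have h1 : E (z - z₁) z₁ * Φ' (z - z₁) z₁ ≤ Φ' (z - z₁) z₁ :=
        mul_le_of_le_one_left (hΦ0 _ _ hx hy) (hE1 _ _)
      have h2 : E (z - z₁) z₁ * Φ' (z - z₁) z₁ * w (z - z₁) * w z₁
          ≤ 2 * k₁ * ((1 + (z - z₁)) * (1 + z₁)) * w (z - z₁) * w z₁ := by
        have h3 := (h1.trans (hΦb _ _ hx hy))
        exact mul_le_mul_of_nonneg_right
          (mul_le_mul_of_nonneg_right h3 (hw0 (z - z₁))) (hw0 z₁)
      calc ENNReal.ofReal (E (z - z₁) z₁ * Φ' (z - z₁) z₁ * w (z - z₁) * w z₁)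
          ≤ ENNReal.ofReal ((2 * k₁) * (((1 + (z - z₁)) * w (z - z₁)) * ((1 + z₁) * w z₁))) := by
            apply ENNReal.ofReal_le_ofReal
            nlinarith [h2]
        _ = Kf z z₁ := by
            rw [hKf]
            rw [ENNReal.ofReal_mul (by linarith),
              ENNReal.ofReal_mul (mul_nonneg (by linarith) (hw0 (z - z₁)))]
      
    calc ENNReal.ofReal ‖C1 E Φ' w z‖
        = ENNReal.ofReal (1/2) *
            ENNReal.ofReal ‖∫ z₁ in Ioo (0:ℝ) z,
              E (z - z₁) z₁ * Φ' (z - z₁) z₁ * w (z - z₁) * w z₁‖ := by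
          unfold C1
          rw [norm_mul, ENNReal.ofReal_mul (norm_nonneg _)]
          norm_num
      _ ≤ ENNReal.ofReal (1/2) * ∫⁻ z₁ in Ioo (0:ℝ) z,
            ENNReal.ofReal ‖E (z - z₁) z₁ * Φ' (z - z₁) z₁ * w (z - z₁) * w z₁‖ :=
          mul_le_mul_right (ofReal_norm_integral_le _ _) _
      _ ≤ ENNReal.ofReal (1/2) * ∫⁻ z₁ in Ioo (0:ℝ) z, Kf z z₁ := by
          refine mul_le_mul_right ?_ _
          refine lintegral_mono_ae ?_
          filter_upwards [ae_restrict_mem measurableSet_Ioo] with z₁ hz₁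
          exact hb z₁ hz₁
      _ = ENNReal.ofReal (1/2) * ∫⁻ z₁, trif Kf (z, z₁) := by
          rw [lint_Ioo_eq_trif]
  · have hstep : ∫⁻ z in Ioi (0:ℝ), (ENNReal.ofReal (1/2) * ∫⁻ z₁, trif Kf (z, z₁))
        = ENNReal.ofReal (1/2) * (ENNReal.ofReal (2*k₁) *
            ∫⁻ z in Ioi (0:ℝ), ∫⁻ z₁ in Ioo (0:ℝ) z, φ (z - z₁) * φ z₁) := by
      rw [lintegral_const_mul' _ _ ENNReal.ofReal_ne_top]
      congr 1
      rw [← lintegral_const_mul' _ _ ENNReal.ofReal_ne_top]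
      refine setLIntegral_congr_fun_ae measurableSet_Ioi (Filter.Eventually.of_forall ?_)
      intro z _
      rw [← lint_Ioo_eq_trif, ← lintegral_const_mul' _ _ ENNReal.ofReal_ne_top]
    rw [hstep]
    calc ENNReal.ofReal (1/2) * (ENNReal.ofReal (2*k₁) *
            ∫⁻ z in Ioi (0:ℝ), ∫⁻ z₁ in Ioo (0:ℝ) z, φ (z - z₁) * φ z₁)
        ≤ ENNReal.ofReal (1/2) * (ENNReal.ofReal (2*k₁) *
            ((∫⁻ y in Ioi (0:ℝ), φ y) * (∫⁻ y in Ioi (0:ℝ), φ y))) := by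
          exact mul_le_mul_right (mul_le_mul_right (tri_lintegral hφm) _) _
      _ = ENNReal.ofReal k₁ *
            ((∫⁻ y in Ioi (0:ℝ), φ y) * (∫⁻ y in Ioi (0:ℝ), φ y)) := by
          rw [← mul_assoc, ← ENNReal.ofReal_mul (by norm_num)]
          congr 2
          ring

end opbounds

section opB3

variable {k₁ : ℝ} {Φ' : ℝ → ℝ → ℝ} {w : ℝ → ℝ}

lemma opB3_bound (hk : 0 ≤ k₁)
    (hΦ0 : ∀ x y, 0 < x → 0 < y → 0 ≤ Φ' x y)
    (hΦb : ∀ x y, 0 < x → 0 < y → Φ' x y ≤ 2 * k₁ * ((1 + x) * (1 + y)))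
    (hwm : Measurable w) (hw0 : ∀ y, 0 ≤ w y)
    (Bfun : ℝ → ℝ)
    (hform : ∀ z, 0 < z → ∃ S : Set ℝ, S ⊆ Ioi (0:ℝ) ∧
      Bfun z = ∫ z₁ in S, Φ' z z₁ * w z * w z₁) :
    ∃ H : ℝ → ℝ≥0∞, Measurable H ∧ (∀ z ∈ Ioi (0:ℝ), ENNReal.ofReal ‖Bfun z‖ ≤ H z) ∧
      ∫⁻ z in Ioi (0:ℝ), H z ≤ ENNReal.ofReal (2 * k₁) *
        ((∫⁻ y in Ioi (0:ℝ), ENNReal.ofReal ((1 + y) * w y))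
          * (∫⁻ y in Ioi (0:ℝ), ENNReal.ofReal ((1 + y) * w y))) := by
  set φ : ℝ → ℝ≥0∞ := fun y => ENNReal.ofReal ((1 + y) * w y) with hφdef
  have hφm : Measurable φ := phi_meas hwm
  set Λ : ℝ≥0∞ := ∫⁻ y in Ioi (0:ℝ), φ y with hΛdef
  refine ⟨fun z => ENNReal.ofReal (2 * k₁) * (φ z * Λ), ?_, ?_, ?_⟩
  · exact (hφm.mul measurable_const).const_mul _
  · intro z hz
    rw [mem_Ioi] at hz
    obtain ⟨S, hSsub, hSeq⟩ := hform z hz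
    have hb : ∀ z₁ ∈ Ioi (0:ℝ),
        ENNReal.ofReal ‖Φ' z z₁ * w z * w z₁‖
          ≤ (ENNReal.ofReal (2 * k₁) * φ z) * φ z₁ := by
      intro z₁ hz₁
      rw [mem_Ioi] at hz₁
      have hnn : 0 ≤ Φ' z z₁ * w z * w z₁ := by
        have := hΦ0 z z₁ hz hz₁
        have := hw0 z; have := hw0 z₁
        positivity
      rw [Real.norm_eq_abs, abs_of_nonneg hnn]
      have h2 : Φ' z z₁ * w z * w z₁
          ≤ (2 * k₁) * (((1 + z) * w z) * ((1 + z₁) * w z₁)) := by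
        have h3 := hΦb z z₁ hz hz₁
        nlinarith [mul_le_mul_of_nonneg_right
          (mul_le_mul_of_nonneg_right h3 (hw0 z)) (hw0 z₁)]
      calc ENNReal.ofReal (Φ' z z₁ * w z * w z₁)
          ≤ ENNReal.ofReal ((2 * k₁) * (((1 + z) * w z) * ((1 + z₁) * w z₁))) :=
            ENNReal.ofReal_le_ofReal h2
        _ = (ENNReal.ofReal (2 * k₁) * φ z) * φ z₁ := by
            rw [ENNReal.ofReal_mul (by linarith),
              ENNReal.ofReal_mul (mul_nonneg (by linarith : (0:ℝ) ≤ 1 + z) (hw0 z)), ← mul_assoc]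
    calc ENNReal.ofReal ‖Bfun z‖
        ≤ ∫⁻ z₁ in S, ENNReal.ofReal ‖Φ' z z₁ * w z * w z₁‖ := by
          rw [hSeq]; exact ofReal_norm_integral_le _ _
      _ ≤ ∫⁻ z₁ in Ioi (0:ℝ), ENNReal.ofReal ‖Φ' z z₁ * w z * w z₁‖ :=
          lintegral_mono_set hSsub
      _ ≤ ∫⁻ z₁ in Ioi (0:ℝ), (ENNReal.ofReal (2 * k₁) * φ z) * φ z₁ := by
          refine lintegral_mono_ae ?_
          filter_upwards [ae_restrict_mem measurableSet_Ioi] with z₁ hz₁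
          exact hb z₁ hz₁
      _ = ENNReal.ofReal (2 * k₁) * (φ z * Λ) := by
          rw [lintegral_const_mul'' _ hφm.aemeasurable, hΛdef, mul_assoc]
  · have h1 : ∀ z : ℝ, ENNReal.ofReal (2 * k₁) * (φ z * Λ)
        = (ENNReal.ofReal (2 * k₁) * Λ) * φ z := fun z => by ring
    simp only [h1]
    rw [lintegral_const_mul'' _ hφm.aemeasurable]
    refine le_of_eq ?_
    ring

end opB3

lemma exists_mk (w : ℝ → ℝ) (hw0 : ∀ y, 0 ≤ w y)
    (hI : IntegrableOn (fun z => (1 + z) * w z) (Ioi 0) volume) :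
    ∃ w' : ℝ → ℝ, Measurable w' ∧ (∀ y, 0 ≤ w' y) ∧ AEeq w w' ∧
      (∫⁻ y in Ioi (0:ℝ), ENNReal.ofReal ((1 + y) * w' y))
        = ENNReal.ofReal (∫ z in Ioi (0:ℝ), (1 + z) * w z) := by
  have haem : AEMeasurable w (volume.restrict (Ioi (0:ℝ))) := by
    have h1 : AEMeasurable (fun z => (1 + z) * w z) (volume.restrict (Ioi (0:ℝ))) :=
      hI.aemeasurable
    have h2 : AEMeasurable (fun z => (1 + z)⁻¹ * ((1 + z) * w z))
        (volume.restrict (Ioi (0:ℝ))) :=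
      ((measurable_const.add measurable_id).inv).aemeasurable.mul h1
    refine h2.congr ?_
    rw [EventuallyEq, ae_restrict_iff' measurableSet_Ioi]
    refine Filter.Eventually.of_forall fun z hz => ?_
    have hz0 : (0:ℝ) < z := hz
    have hne : (1 : ℝ) + z ≠ 0 := by linarith
    rw [← mul_assoc, inv_mul_cancel₀ hne, one_mul]
  set wt := haem.mk w with hwt
  have hwtm : Measurable wt := haem.measurable_mk
  have hueq : w =ᵐ[volume.restrict (Ioi (0:ℝ))] wt := haem.ae_eq_mk
  refine ⟨fun y => if 0 < y then max (wt y) 0 else 0, ?_, ?_, ?_, ?_⟩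
  · exact Measurable.ite measurableSet_Ioi (hwtm.max measurable_const) measurable_const
  · intro y
    by_cases h : 0 < y
    · simp only [if_pos h]; exact le_max_right _ _
    · simp only [if_neg h]; exact le_rfl
  · unfold AEeq
    have h3 := (ae_restrict_iff' measurableSet_Ioi).1 hueq
    filter_upwards [h3] with y hy hmem
    have h0 : 0 < y := hmem
    rw [if_pos h0, ← hy hmem, max_eq_left (hw0 y)]
  · have hcong : (∫⁻ y in Ioi (0:ℝ),
        ENNReal.ofReal ((1 + y) * (if 0 < y then max (wt y) 0 else 0)))
        = ∫⁻ y in Ioi (0:ℝ), ENNReal.ofReal ((1 + y) * w y) := by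
      refine lintegral_congr_ae ?_
      have h3 := (ae_restrict_iff' measurableSet_Ioi).1 hueq
      rw [Filter.EventuallyEq, ae_restrict_iff' measurableSet_Ioi]
      filter_upwards [h3] with y hy hmem
      have h0 : 0 < y := hmem
      rw [if_pos h0, ← hy hmem, max_eq_left (hw0 y)]
    rw [hcong, ← ofReal_integral_eq_lintegral_ofReal hI]
    rw [Filter.EventuallyLE, ae_restrict_iff' measurableSet_Ioi]
    refine Filter.Eventually.of_forall fun z hz => ?_
    have hz0 : (0:ℝ) < z := hz
    exact mul_nonneg (by linarith) (hw0 z)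

lemma lint_Ioi_eq_trif' (f : ℝ → ℝ → ℝ≥0∞) (z : ℝ) (h : 0 < z) :
    ∫⁻ z₁ in Ioi z, f z z₁ = ∫⁻ z₁, trif' f (z, z₁) := by
  rw [← lintegral_indicator measurableSet_Ioi]
  refine lintegral_congr fun z₁ => ?_
  by_cases hz : z₁ ∈ Ioi z
  · rw [Set.indicator_of_mem hz]
    simp only [trif']
    rw [if_pos ⟨h, hz⟩]
  · rw [Set.indicator_of_notMem hz]
    simp only [trif']
    rw [if_neg (fun hc => hz hc.2)]

section opB1

variable {k₁ N : ℝ} {E Φ' : ℝ → ℝ → ℝ} {P : ℝ → ℝ → ℝ → ℝ} {w : ℝ → ℝ}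

lemma opB1_bound (hk : 0 ≤ k₁)
    (hE0 : ∀ x y, 0 ≤ E x y) (hE1 : ∀ x y, E x y ≤ 1)
    (hΦ0 : ∀ x y, 0 < x → 0 < y → 0 ≤ Φ' x y)
    (hΦb : ∀ x y, 0 < x → 0 < y → Φ' x y ≤ 2 * k₁ * ((1 + x) * (1 + y)))
    (hwm : Measurable w) (hw0 : ∀ y, 0 ≤ w y)
    (hPmeas : Measurable fun p : ℝ × ℝ × ℝ => P p.1 p.2.1 p.2.2)
    (hPnn : ∀ z z₁ z₂, 0 ≤ P z z₁ z₂)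
    (hPN : ∀ y₁ y₂ : ℝ, 0 < y₁ → 0 < y₂ →
      ∫⁻ z in Ioo (0:ℝ) (y₁ + y₂), ENNReal.ofReal (P z y₁ y₂) ≤ ENNReal.ofReal N)
    (Bfun : ℝ → ℝ)
    (hform : ∀ z, 0 < z → ∃ S : Set ℝ, S ⊆ Ioi z ∧
      Bfun z = (1/2) * ∫ z₁ in S, ∫ z₂ in Ioo (0:ℝ) z₁,
        P z (z₁ - z₂) z₂ * (1 - E (z₁ - z₂) z₂) * Φ' (z₁ - z₂) z₂ * w (z₁ - z₂) * w z₂) :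
    ∃ H : ℝ → ℝ≥0∞, Measurable H ∧ (∀ z ∈ Ioi (0:ℝ), ENNReal.ofReal ‖Bfun z‖ ≤ H z) ∧
      ∫⁻ z in Ioi (0:ℝ), H z ≤ ENNReal.ofReal k₁ * (ENNReal.ofReal N *
        ((∫⁻ y in Ioi (0:ℝ), ENNReal.ofReal ((1 + y) * w y))
          * (∫⁻ y in Ioi (0:ℝ), ENNReal.ofReal ((1 + y) * w y)))) := by
  set φ : ℝ → ℝ≥0∞ := fun y => ENNReal.ofReal ((1 + y) * w y) with hφdef
  have hφm : Measurable φ := phi_meas hwm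
  set Λ : ℝ≥0∞ := ∫⁻ y in Ioi (0:ℝ), φ y with hΛdef
  set pf : ℝ → ℝ → ℝ → ℝ≥0∞ := fun z z₁ z₂ =>
    ENNReal.ofReal (P z (z₁ - z₂) z₂) *
      (ENNReal.ofReal (2 * k₁) * (φ (z₁ - z₂) * φ z₂)) with hpf
  have hpfm : Measurable (fun q : (ℝ × ℝ) × ℝ => pf q.1.1 q.1.2 q.2) := by
    refine Measurable.mul
      (f := fun q : (ℝ × ℝ) × ℝ => ENNReal.ofReal (P q.1.1 (q.1.2 - q.2) q.2))
      (g := fun q : (ℝ × ℝ) × ℝ => ENNReal.ofReal (2 * k₁) * (φ (q.1.2 - q.2) * φ q.2)) ?_ ?_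
    · apply Measurable.ennreal_ofReal
      exact hPmeas.comp ((measurable_fst.comp measurable_fst).prodMk
        (((measurable_snd.comp measurable_fst).sub measurable_snd).prodMk measurable_snd))
    · apply Measurable.const_mul
      exact ((hφm.comp ((measurable_snd.comp measurable_fst).sub measurable_snd)).mul
        (hφm.comp measurable_snd))
  set big : (ℝ × ℝ) × ℝ → ℝ≥0∞ :=
    fun q => if 0 < q.2 ∧ q.2 < q.1.2 then pf q.1.1 q.1.2 q.2 else 0 with hbig
  have hbigm : Measurable big := by
    apply Measurable.ite ?_ hpfm measurable_const
    exact (measurableSet_lt measurable_const measurable_snd).inter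
      (measurableSet_lt measurable_snd (measurable_snd.comp measurable_fst))
  set inner2 : ℝ → ℝ → ℝ≥0∞ := fun z z₁ => ∫⁻ z₂ in Ioo (0:ℝ) z₁, pf z z₁ z₂ with hinner2
  have h_in_eq : ∀ z z₁, inner2 z z₁ = ∫⁻ z₂, big ((z, z₁), z₂) := by
    intro z z₁
    show (∫⁻ z₂ in Ioo (0:ℝ) z₁, pf z z₁ z₂) = _
    rw [← lintegral_indicator measurableSet_Ioo]
    refine lintegral_congr fun z₂ => ?_
    by_cases h : z₂ ∈ Ioo (0:ℝ) z₁
    · rw [Set.indicator_of_mem h]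
      simp only [hbig, mem_Ioo] at *
      rw [if_pos h]
    · rw [Set.indicator_of_notMem h]
      simp only [hbig, mem_Ioo] at *
      rw [if_neg h]
  have hinm : Measurable (Function.uncurry inner2) := by
    have heq : Function.uncurry inner2 = fun p : ℝ × ℝ => ∫⁻ z₂, big (p, z₂) :=
      funext fun p => h_in_eq p.1 p.2
    rw [heq]
    exact hbigm.lintegral_prod_right'
  -- pointwise bound on the inner double integral
  have hstepi : ∀ z z₁ : ℝ, ENNReal.ofReal ‖∫ z₂ in Ioo (0:ℝ) z₁,
      P z (z₁ - z₂) z₂ * (1 - E (z₁ - z₂) z₂) * Φ' (z₁ - z₂) z₂ * w (z₁ - z₂) * w z₂‖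
      ≤ inner2 z z₁ := by
    intro z z₁
    refine le_trans (ofReal_norm_integral_le _ _) ?_
    show _ ≤ ∫⁻ z₂ in Ioo (0:ℝ) z₁, pf z z₁ z₂
    refine lintegral_mono_ae ?_
    filter_upwards [ae_restrict_mem measurableSet_Ioo] with z₂ hz₂
    have hx : 0 < z₁ - z₂ := by linarith [hz₂.2]
    have hy : 0 < z₂ := hz₂.1
    set x := z₁ - z₂
    set A := P z x z₂ with hA
    have hA0 : 0 ≤ A := hPnn _ _ _
    have h1mE0 : 0 ≤ 1 - E x z₂ := by linarith [hE1 x z₂]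
    have h1mE1 : 1 - E x z₂ ≤ 1 := by linarith [hE0 x z₂]
    have hnn : 0 ≤ A * (1 - E x z₂) * Φ' x z₂ * w x * w z₂ := by
      have := hΦ0 x z₂ hx hy
      have := hw0 x; have := hw0 z₂
      positivity
    rw [Real.norm_eq_abs, abs_of_nonneg hnn]
    have hEΦ : (1 - E x z₂) * Φ' x z₂ ≤ 2 * k₁ * ((1 + x) * (1 + z₂)) :=
      le_trans (mul_le_of_le_one_left (hΦ0 x z₂ hx hy) h1mE1) (hΦb x z₂ hx hy)
    have key : A * (1 - E x z₂) * Φ' x z₂ ≤ A * (2 * k₁ * ((1 + x) * (1 + z₂))) := by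
      rw [mul_assoc]
      exact mul_le_mul_of_nonneg_left hEΦ hA0
    have key2 := mul_le_mul_of_nonneg_right
      (mul_le_mul_of_nonneg_right key (hw0 x)) (hw0 z₂)
    calc ENNReal.ofReal (A * (1 - E x z₂) * Φ' x z₂ * w x * w z₂)
        ≤ ENNReal.ofReal (A * ((2 * k₁) * (((1 + x) * w x) * ((1 + z₂) * w z₂)))) := by
          apply ENNReal.ofReal_le_ofReal
          nlinarith [key2]
      _ = pf z z₁ z₂ := by
          rw [hpf, ENNReal.ofReal_mul hA0, ENNReal.ofReal_mul (by linarith),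
            ENNReal.ofReal_mul (mul_nonneg (by linarith) (hw0 x))]
  refine ⟨fun z => ENNReal.ofReal (1/2) * ∫⁻ z₁, trif' inner2 (z, z₁), ?_, ?_, ?_⟩
  · exact (Measurable.lintegral_prod_right' (trif'_meas hinm)).const_mul _
  · intro z hz
    rw [mem_Ioi] at hz
    obtain ⟨S, hSsub, hSeq⟩ := hform z hz
    calc ENNReal.ofReal ‖Bfun z‖
        = ENNReal.ofReal (1/2) * ENNReal.ofReal ‖∫ z₁ in S, ∫ z₂ in Ioo (0:ℝ) z₁,
            P z (z₁ - z₂) z₂ * (1 - E (z₁ - z₂) z₂) * Φ' (z₁ - z₂) z₂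
              * w (z₁ - z₂) * w z₂‖ := by
          rw [hSeq, norm_mul, ENNReal.ofReal_mul (norm_nonneg _)]
          norm_num
      _ ≤ ENNReal.ofReal (1/2) * ∫⁻ z₁ in S, ENNReal.ofReal ‖∫ z₂ in Ioo (0:ℝ) z₁,
            P z (z₁ - z₂) z₂ * (1 - E (z₁ - z₂) z₂) * Φ' (z₁ - z₂) z₂
              * w (z₁ - z₂) * w z₂‖ :=
          mul_le_mul_right (ofReal_norm_integral_le _ _) _
      _ ≤ ENNReal.ofReal (1/2) * ∫⁻ z₁ in Ioi z, ENNReal.ofReal ‖∫ z₂ in Ioo (0:ℝ) z₁,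
            P z (z₁ - z₂) z₂ * (1 - E (z₁ - z₂) z₂) * Φ' (z₁ - z₂) z₂
              * w (z₁ - z₂) * w z₂‖ :=
          mul_le_mul_right (lintegral_mono_set hSsub) _
      _ ≤ ENNReal.ofReal (1/2) * ∫⁻ z₁ in Ioi z, inner2 z z₁ :=
          mul_le_mul_right (lintegral_mono fun z₁ => hstepi z z₁) _
      _ = ENNReal.ofReal (1/2) * ∫⁻ z₁, trif' inner2 (z, z₁) := by
          rw [lint_Ioi_eq_trif' inner2 z hz]
  · have hstep : ∫⁻ z in Ioi (0:ℝ), (ENNReal.ofReal (1/2) * ∫⁻ z₁, trif' inner2 (z, z₁))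
        = ENNReal.ofReal (1/2) * ∫⁻ z₁ in Ioi (0:ℝ), ∫⁻ z in Ioo (0:ℝ) z₁, inner2 z z₁ := by
      rw [lintegral_const_mul' _ _ ENNReal.ofReal_ne_top]
      congr 1
      rw [← swap_B inner2 hinm]
      refine setLIntegral_congr_fun_ae measurableSet_Ioi (Filter.Eventually.of_forall ?_)
      intro z hz
      rw [lint_Ioi_eq_trif' inner2 z hz]
    rw [hstep]
    have hkey : ∫⁻ z₁ in Ioi (0:ℝ), ∫⁻ z in Ioo (0:ℝ) z₁, inner2 z z₁
        ≤ (ENNReal.ofReal N * ENNReal.ofReal (2 * k₁)) *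
            ∫⁻ z₁ in Ioi (0:ℝ), ∫⁻ z₂ in Ioo (0:ℝ) z₁, φ (z₁ - z₂) * φ z₂ := by
      rw [← lintegral_const_mul' _ _
        (ENNReal.mul_ne_top ENNReal.ofReal_ne_top ENNReal.ofReal_ne_top)]
      refine lintegral_mono_ae ?_
      filter_upwards [ae_restrict_mem measurableSet_Ioi] with z₁ hz₁
      rw [mem_Ioi] at hz₁
      -- swap z and z₂ for fixed z₁
      have hswap : ∫⁻ z in Ioo (0:ℝ) z₁, inner2 z z₁
          = ∫⁻ z₂ in Ioo (0:ℝ) z₁, ∫⁻ z in Ioo (0:ℝ) z₁, pf z z₁ z₂ := by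
        simp only [hinner2]
        refine lintegral_lintegral_swap ?_
        exact (hpfm.comp ((measurable_fst.prodMk measurable_const).prodMk
          measurable_snd)).aemeasurable
      rw [hswap, ← lintegral_const_mul' _ _
        (ENNReal.mul_ne_top ENNReal.ofReal_ne_top ENNReal.ofReal_ne_top)]
      refine lintegral_mono_ae ?_
      filter_upwards [ae_restrict_mem measurableSet_Ioo] with z₂ hz₂
      have hx : 0 < z₁ - z₂ := by linarith [hz₂.2]
      have hy : 0 < z₂ := hz₂.1
      have hC : ENNReal.ofReal (2 * k₁) * (φ (z₁ - z₂) * φ z₂) ≠ ⊤ :=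
        ENNReal.mul_ne_top ENNReal.ofReal_ne_top
          (ENNReal.mul_ne_top ENNReal.ofReal_ne_top ENNReal.ofReal_ne_top)
      calc ∫⁻ z in Ioo (0:ℝ) z₁, pf z z₁ z₂
          = (∫⁻ z in Ioo (0:ℝ) z₁, ENNReal.ofReal (P z (z₁ - z₂) z₂)) *
              (ENNReal.ofReal (2 * k₁) * (φ (z₁ - z₂) * φ z₂)) := by
            rw [hpf]
            exact lintegral_mul_const' _ _ hC
        _ ≤ ENNReal.ofReal N * (ENNReal.ofReal (2 * k₁) * (φ (z₁ - z₂) * φ z₂)) := by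
            refine mul_le_mul_left ?_ _
            have h7 : z₁ - z₂ + z₂ = z₁ := by ring
            have h8 := hPN (z₁ - z₂) z₂ hx hy
            rwa [h7] at h8
        _ = (ENNReal.ofReal N * ENNReal.ofReal (2 * k₁)) * (φ (z₁ - z₂) * φ z₂) := by
            ring
    calc ENNReal.ofReal (1/2) * ∫⁻ z₁ in Ioi (0:ℝ), ∫⁻ z in Ioo (0:ℝ) z₁, inner2 z z₁
        ≤ ENNReal.ofReal (1/2) * ((ENNReal.ofReal N * ENNReal.ofReal (2 * k₁)) *
            ∫⁻ z₁ in Ioi (0:ℝ), ∫⁻ z₂ in Ioo (0:ℝ) z₁, φ (z₁ - z₂) * φ z₂) :=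
          mul_le_mul_right hkey _
      _ ≤ ENNReal.ofReal (1/2) * ((ENNReal.ofReal N * ENNReal.ofReal (2 * k₁)) * (Λ * Λ)) :=
          mul_le_mul_right (mul_le_mul_right (tri_lintegral hφm) _) _
      _ = ENNReal.ofReal k₁ * (ENNReal.ofReal N * (Λ * Λ)) := by
          have hc : ENNReal.ofReal (1/2 : ℝ) * ENNReal.ofReal (2 * k₁) = ENNReal.ofReal k₁ := by
            rw [← ENNReal.ofReal_mul (by norm_num : (0:ℝ) ≤ 1/2)]
            congr 1
            ring
          calc ENNReal.ofReal (1/2 : ℝ) *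
                ((ENNReal.ofReal N * ENNReal.ofReal (2 * k₁)) * (Λ * Λ))
              = (ENNReal.ofReal (1/2 : ℝ) * ENNReal.ofReal (2 * k₁)) *
                  (ENNReal.ofReal N * (Λ * Λ)) := by ring
            _ = ENNReal.ofReal k₁ * (ENNReal.ofReal N * (Λ * Λ)) := by rw [hc]

end opB1

/-- Uniform domination in `L¹((0,a))` of the difference between the
truncated and untruncated coagulation–collisional breakage operators. -/
theorem trunc_operators_uniformly_dominated
    (k₁ α β N T : ℝ) (E : ℝ → ℝ → ℝ) (P : ℝ → ℝ → ℝ → ℝ)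
    (g₀ : ℝ → ℝ) (gn : ℕ → ℝ → ℝ → ℝ) (g : ℝ → ℝ → ℝ)
    (hT : 0 < T)
    (hk₁ : 0 ≤ k₁) (hα : 0 < α) (hαβ : α ≤ β) (hβ : β < 1)
    (hEmeas : Measurable (Function.uncurry E))
    (hEsymm : ∀ z z₁, E z z₁ = E z₁ z)
    (hEnn : ∀ z z₁, 0 ≤ E z z₁) (hEle : ∀ z z₁, E z z₁ ≤ 1)
    (hΓ₃ : ∀ z ∈ Ioo (0:ℝ) 1, ∀ z₁ ∈ Ioo (0:ℝ) 1, (N - 2) / (N - 1) ≤ E z z₁)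
    (hPmeas : Measurable fun p : ℝ × ℝ × ℝ => P p.1 p.2.1 p.2.2)
    (hPnn : ∀ z z₁ z₂, 0 ≤ P z z₁ z₂)
    (hPsymm : ∀ z z₁ z₂, P z z₁ z₂ = P z z₂ z₁)
    (hPsupp : ∀ z z₁ z₂, z₁ + z₂ < z → P z z₁ z₂ = 0)
    (hPnum : ∀ z₁ z₂, 0 < z₁ → 0 < z₂ → (∫ z in Ioo (0:ℝ) (z₁ + z₂), P z z₁ z₂) = N)
    (hPmass : ∀ z₁ z₂, 0 < z₁ → 0 < z₂ → (∫ z in Ioo (0:ℝ) (z₁ + z₂), z * P z z₁ z₂) = z₁ + z₂)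
    (hΓ₄ : ∀ W > (0:ℝ), ∃ Ω₁ : ℝ → ℝ, Tendsto Ω₁ (nhdsWithin 0 (Ioi 0)) (nhds 0) ∧
      ∀ z₁ ∈ Ioo (0:ℝ) W, ∀ z₂ ∈ Ioo (0:ℝ) z₁, ∀ U : Set ℝ, MeasurableSet U → U ⊆ Ioo 0 1 →
        (∫ z in Ioo (0:ℝ) z₁, U.indicator (fun _ => (1:ℝ)) z * P z (z₁ - z₂) z₂)
          ≤ Ω₁ ((volume U).toReal) * z₁ ^ (-α))
    (hΓ₅ : ∀ W > (0:ℝ), ∃ kW > (0:ℝ), ∃ τ₂ : ℝ, 0 ≤ τ₂ ∧ τ₂ < 1 ∧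
      ∀ z₁ z₂ : ℝ, 0 < z₁ → 0 < z₂ → W < z₁ + z₂ →
        ∀ z ∈ Ioo (0:ℝ) W, P z z₁ z₂ ≤ kW * z ^ (-τ₂))
    (hg₀ : MemSplus g₀)
    (n : ℕ) (hn : 1 ≤ n)
    (hsol : IsTruncSol k₁ α β E P T g₀ n (gn n))
    (a : ℝ) (ha : 0 < a) (t : ℝ) (htT : t ∈ Icc (0:ℝ) T)
    (hg : ∀ s ∈ Icc (0:ℝ) t, MemSplus (fun z => g z s))
    (GT : ℝ)
    (hGT : ∀ s ∈ Icc (0:ℝ) t, (∫ z in Ioi (0:ℝ), (1 + z) * gn n z s) ≤ GT)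
    (ψ : ℝ → ℝ) (Cψ : ℝ) (hψm : Measurable ψ) (hψb : ∀ z, |ψ z| ≤ Cψ) :
    ∀ s ∈ Icc (0:ℝ) t,
      |∫ z in Ioo (0:ℝ) a, ψ z *
        ((C1 E (PhiN k₁ α β (n : ℝ)) (fun y => gn n y s) z
            - B3n (PhiN k₁ α β (n : ℝ)) (n : ℝ) (fun y => gn n y s) z
            + B1n P E (PhiN k₁ α β (n : ℝ)) (n : ℝ) (fun y => gn n y s) z)
          - (C1 E (Phi k₁ α β) (fun y => g y s) z
              - B3 (Phi k₁ α β) (fun y => g y s) z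
              + B1 P E (Phi k₁ α β) (fun y => g y s) z))|
      ≤ k₁ * Cψ * (GT ^ 2 * (3 + N)
          + (∫ z in Ioi (0:ℝ), (1 + z) * g z s) ^ 2 * (5 + N)) := by
  
  intro s hs
  have hsT : s ∈ Icc (0:ℝ) T := ⟨hs.1, hs.2.trans htT.2⟩
  have hu0 : ∀ y, 0 ≤ (fun y => gn n y s) y := fun y => hsol.1 y s
  have hIu : IntegrableOn (fun z => (1 + z) * gn n z s) (Ioi 0) volume := hsol.2.2.1 s hsT
  have hv0 : ∀ y, 0 ≤ (fun y => g y s) y := fun y => (hg s hs).1 y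
  have hIv : IntegrableOn (fun z => (1 + z) * g z s) (Ioi 0) volume := (hg s hs).2
  have hCψ0 : 0 ≤ Cψ := le_trans (abs_nonneg _) (hψb 0)
  have hN0 : 0 ≤ N := by
    rw [← hPnum 1 1 one_pos one_pos]
    exact setIntegral_nonneg measurableSet_Ioo fun z _ => hPnn _ _ _
  set Mu : ℝ := ∫ z in Ioi (0:ℝ), (1 + z) * gn n z s with hMudef
  set Mv : ℝ := ∫ z in Ioi (0:ℝ), (1 + z) * g z s with hMvdef
  have hMu0 : 0 ≤ Mu := by
    rw [hMudef]
    refine setIntegral_nonneg measurableSet_Ioi fun z hz => ?_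
    have hz0 : (0:ℝ) < z := hz
    exact mul_nonneg (by linarith) (hu0 z)
  have hMv0 : 0 ≤ Mv := by
    rw [hMvdef]
    refine setIntegral_nonneg measurableSet_Ioi fun z hz => ?_
    have hz0 : (0:ℝ) < z := hz
    exact mul_nonneg (by linarith) (hv0 z)
  have hMuGT : Mu ≤ GT := hGT s hs
  have hGT0 : 0 ≤ GT := hMu0.trans hMuGT
  -- measurable versions
  obtain ⟨u', hu'm, hu'0, hu'ae, hΛu⟩ := exists_mk (fun y => gn n y s) hu0 hIu
  obtain ⟨v', hv'm, hv'0, hv'ae, hΛv⟩ := exists_mk (fun y => g y s) hv0 hIv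
  rw [← hMudef] at hΛu
  rw [← hMvdef] at hΛv
  -- kernel bounds
  have hΦ0N : ∀ x y : ℝ, 0 < x → 0 < y → 0 ≤ PhiN k₁ α β (n:ℝ) x y :=
    fun x y hx hy => PhiN_nonneg hk₁ hx hy
  have hΦbN : ∀ x y : ℝ, 0 < x → 0 < y →
      PhiN k₁ α β (n:ℝ) x y ≤ 2 * k₁ * ((1 + x) * (1 + y)) :=
    fun x y hx hy => PhiN_le hk₁ hα hαβ hβ hx hy
  have hΦ0P : ∀ x y : ℝ, 0 < x → 0 < y → 0 ≤ Phi k₁ α β x y :=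
    fun x y hx hy => Phi_nonneg hk₁ hx hy
  have hΦbP : ∀ x y : ℝ, 0 < x → 0 < y →
      Phi k₁ α β x y ≤ 2 * k₁ * ((1 + x) * (1 + y)) :=
    fun x y hx hy => Phi_le hk₁ hα hαβ hβ hx hy
  have hPN : ∀ y₁ y₂ : ℝ, 0 < y₁ → 0 < y₂ →
      ∫⁻ z in Ioo (0:ℝ) (y₁ + y₂), ENNReal.ofReal (P z y₁ y₂) ≤ ENNReal.ofReal N :=
    fun y₁ y₂ h1 h2 => P_lint P N hPmeas hPnn hPnum hPmass hΓ₅ h1 h2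
  -- the six dominators
  obtain ⟨H1, hH1m, hH1p, hH1i⟩ := opC1_bound hk₁ hEnn hEle hΦ0N hΦbN hu'm hu'0
  obtain ⟨H2, hH2m, hH2p, hH2i⟩ := opB3_bound hk₁ hΦ0N hΦbN hu'm hu'0
    (B3n (PhiN k₁ α β (n:ℝ)) (n:ℝ) u')
    (fun z _ => ⟨Ioo 0 ((n:ℝ) - z), Ioo_subset_Ioi_self, rfl⟩)
  obtain ⟨H3, hH3m, hH3p, hH3i⟩ := opB1_bound hk₁ hEnn hEle hΦ0N hΦbN hu'm hu'0
    hPmeas hPnn hPN (B1n P E (PhiN k₁ α β (n:ℝ)) (n:ℝ) u')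
    (fun z _ => ⟨Ioo z (n:ℝ), Ioo_subset_Ioi_self, rfl⟩)
  obtain ⟨H4, hH4m, hH4p, hH4i⟩ := opC1_bound hk₁ hEnn hEle hΦ0P hΦbP hv'm hv'0
  obtain ⟨H5, hH5m, hH5p, hH5i⟩ := opB3_bound hk₁ hΦ0P hΦbP hv'm hv'0
    (B3 (Phi k₁ α β) v') (fun z _ => ⟨Ioi 0, fun _ h => h, rfl⟩)
  obtain ⟨H6, hH6m, hH6p, hH6i⟩ := opB1_bound hk₁ hEnn hEle hΦ0P hΦbP hv'm hv'0
    hPmeas hPnn hPN (B1 P E (Phi k₁ α β) v') (fun z _ => ⟨Ioi z, fun _ h => h, rfl⟩)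
  -- replace by measurable versions inside the integral
  have hcong : (fun z => ψ z *
        ((C1 E (PhiN k₁ α β (n : ℝ)) (fun y => gn n y s) z
            - B3n (PhiN k₁ α β (n : ℝ)) (n : ℝ) (fun y => gn n y s) z
            + B1n P E (PhiN k₁ α β (n : ℝ)) (n : ℝ) (fun y => gn n y s) z)
          - (C1 E (Phi k₁ α β) (fun y => g y s) z
              - B3 (Phi k₁ α β) (fun y => g y s) z
              + B1 P E (Phi k₁ α β) (fun y => g y s) z)))
      =ᵐ[volume.restrict (Ioo (0:ℝ) a)]
      (fun z => ψ z *
        ((C1 E (PhiN k₁ α β (n : ℝ)) u' z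
            - B3n (PhiN k₁ α β (n : ℝ)) (n : ℝ) u' z
            + B1n P E (PhiN k₁ α β (n : ℝ)) (n : ℝ) u' z)
          - (C1 E (Phi k₁ α β) v' z
              - B3 (Phi k₁ α β) v' z
              + B1 P E (Phi k₁ α β) v' z))) := by
    filter_upwards [restrict_eq_of_subset hu'ae Ioo_subset_Ioi_self,
      restrict_eq_of_subset hv'ae Ioo_subset_Ioi_self] with z huz hvz
    rw [C1_congr hu'ae E (PhiN k₁ α β (n:ℝ)) z,
      B3n_congr hu'ae (PhiN k₁ α β (n:ℝ)) (n:ℝ) huz,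
      B1n_congr hu'ae P E (PhiN k₁ α β (n:ℝ)) (n:ℝ) z,
      C1_congr hv'ae E (Phi k₁ α β) z,
      B3_congr hv'ae (Phi k₁ α β) hvz,
      B1_congr hv'ae P E (Phi k₁ α β) z]
  rw [integral_congr_ae hcong]
  -- the right-hand side is nonnegative
  have hRHS0 : 0 ≤ k₁ * Cψ * (GT ^ 2 * (3 + N) + Mv ^ 2 * (5 + N)) := by
    have h1 : (0:ℝ) ≤ GT ^ 2 * (3 + N) := by positivity
    have h2 : (0:ℝ) ≤ Mv ^ 2 * (5 + N) := by positivity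
    have := mul_nonneg hk₁ hCψ0
    positivity
  -- main lintegral estimate
  set D : ℝ → ℝ := fun z =>
      (C1 E (PhiN k₁ α β (n : ℝ)) u' z
          - B3n (PhiN k₁ α β (n : ℝ)) (n : ℝ) u' z
          + B1n P E (PhiN k₁ α β (n : ℝ)) (n : ℝ) u' z)
        - (C1 E (Phi k₁ α β) v' z
            - B3 (Phi k₁ α β) v' z
            + B1 P E (Phi k₁ α β) v' z) with hD
  have hmain : (∫⁻ z in Ioo (0:ℝ) a, ENNReal.ofReal ‖ψ z * D z‖)
      ≤ ENNReal.ofReal (k₁ * Cψ * (GT ^ 2 * (3 + N) + Mv ^ 2 * (5 + N))) := by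
    have hstep1 : (∫⁻ z in Ioo (0:ℝ) a, ENNReal.ofReal ‖ψ z * D z‖)
        ≤ ∫⁻ z in Ioo (0:ℝ) a, ENNReal.ofReal Cψ *
            (H1 z + H2 z + H3 z + H4 z + H5 z + H6 z) := by
      refine lintegral_mono_ae ?_
      filter_upwards [ae_restrict_mem measurableSet_Ioo] with z hz
      have hz0 : z ∈ Ioi (0:ℝ) := mem_Ioi.2 hz.1
      have h6sum : |D z| ≤ ‖C1 E (PhiN k₁ α β (n:ℝ)) u' z‖
          + ‖B3n (PhiN k₁ α β (n:ℝ)) (n:ℝ) u' z‖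
          + ‖B1n P E (PhiN k₁ α β (n:ℝ)) (n:ℝ) u' z‖
          + ‖C1 E (Phi k₁ α β) v' z‖ + ‖B3 (Phi k₁ α β) v' z‖
          + ‖B1 P E (Phi k₁ α β) v' z‖ := by
        rw [hD]
        simp only [Real.norm_eq_abs]
        rw [abs_le]
        constructor
        · linarith [neg_abs_le (C1 E (PhiN k₁ α β (n:ℝ)) u' z),
            le_abs_self (B3n (PhiN k₁ α β (n:ℝ)) (n:ℝ) u' z),
            neg_abs_le (B1n P E (PhiN k₁ α β (n:ℝ)) (n:ℝ) u' z),
            le_abs_self (C1 E (Phi k₁ α β) v' z),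
            neg_abs_le (B3 (Phi k₁ α β) v' z),
            le_abs_self (B1 P E (Phi k₁ α β) v' z)]
        · linarith [le_abs_self (C1 E (PhiN k₁ α β (n:ℝ)) u' z),
            neg_abs_le (B3n (PhiN k₁ α β (n:ℝ)) (n:ℝ) u' z),
            le_abs_self (B1n P E (PhiN k₁ α β (n:ℝ)) (n:ℝ) u' z),
            neg_abs_le (C1 E (Phi k₁ α β) v' z),
            le_abs_self (B3 (Phi k₁ α β) v' z),
            neg_abs_le (B1 P E (Phi k₁ α β) v' z)]
      have hofD : ENNReal.ofReal |D z| ≤ H1 z + H2 z + H3 z + H4 z + H5 z + H6 z := by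
        refine le_trans (ENNReal.ofReal_le_ofReal h6sum) ?_
        rw [ENNReal.ofReal_add (by positivity) (norm_nonneg _),
          ENNReal.ofReal_add (by positivity) (norm_nonneg _),
          ENNReal.ofReal_add (by positivity) (norm_nonneg _),
          ENNReal.ofReal_add (by positivity) (norm_nonneg _),
          ENNReal.ofReal_add (by positivity) (norm_nonneg _)]
        exact add_le_add (add_le_add (add_le_add (add_le_add (add_le_add
          (hH1p z) (hH2p z hz0)) (hH3p z hz0)) (hH4p z)) (hH5p z hz0)) (hH6p z hz0)
      calc ENNReal.ofReal ‖ψ z * D z‖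
          = ENNReal.ofReal (|ψ z| * |D z|) := by
            rw [norm_mul, Real.norm_eq_abs, Real.norm_eq_abs]
        _ ≤ ENNReal.ofReal (Cψ * |D z|) :=
            ENNReal.ofReal_le_ofReal (mul_le_mul_of_nonneg_right (hψb z) (abs_nonneg _))
        _ = ENNReal.ofReal Cψ * ENNReal.ofReal |D z| := ENNReal.ofReal_mul hCψ0
        _ ≤ ENNReal.ofReal Cψ * (H1 z + H2 z + H3 z + H4 z + H5 z + H6 z) :=
            mul_le_mul_right hofD _
    refine le_trans hstep1 ?_
    rw [lintegral_const_mul' _ _ ENNReal.ofReal_ne_top]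
    have hstep2 : (∫⁻ z in Ioo (0:ℝ) a, (H1 z + H2 z + H3 z + H4 z + H5 z + H6 z))
        ≤ ∫⁻ z in Ioi (0:ℝ), (H1 z + H2 z + H3 z + H4 z + H5 z + H6 z) :=
      lintegral_mono_set Ioo_subset_Ioi_self
    have hsplit : (∫⁻ z in Ioi (0:ℝ), (H1 z + H2 z + H3 z + H4 z + H5 z + H6 z))
        = (∫⁻ z in Ioi (0:ℝ), H1 z) + (∫⁻ z in Ioi (0:ℝ), H2 z)
          + (∫⁻ z in Ioi (0:ℝ), H3 z) + (∫⁻ z in Ioi (0:ℝ), H4 z)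
          + (∫⁻ z in Ioi (0:ℝ), H5 z) + (∫⁻ z in Ioi (0:ℝ), H6 z) := by
      rw [lintegral_add_left (f := fun z => H1 z + H2 z + H3 z + H4 z + H5 z)
          ((((hH1m.add hH2m).add hH3m).add hH4m).add hH5m),
        lintegral_add_left (f := fun z => H1 z + H2 z + H3 z + H4 z)
          (((hH1m.add hH2m).add hH3m).add hH4m),
        lintegral_add_left (f := fun z => H1 z + H2 z + H3 z) ((hH1m.add hH2m).add hH3m),
        lintegral_add_left (f := fun z => H1 z + H2 z) (hH1m.add hH2m),
        lintegral_add_left hH1m]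
    have htot : (∫⁻ z in Ioo (0:ℝ) a, (H1 z + H2 z + H3 z + H4 z + H5 z + H6 z))
        ≤ ENNReal.ofReal (k₁ * (Mu * Mu)) + ENNReal.ofReal (2 * k₁ * (Mu * Mu))
          + ENNReal.ofReal (k₁ * (N * (Mu * Mu)))
          + ENNReal.ofReal (k₁ * (Mv * Mv)) + ENNReal.ofReal (2 * k₁ * (Mv * Mv))
          + ENNReal.ofReal (k₁ * (N * (Mv * Mv))) := by
      refine le_trans hstep2 ?_
      rw [hsplit]
      have e1 : ENNReal.ofReal (k₁ * (Mu * Mu))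
          = ENNReal.ofReal k₁ * (ENNReal.ofReal Mu * ENNReal.ofReal Mu) := by
        rw [ENNReal.ofReal_mul hk₁, ENNReal.ofReal_mul hMu0]
      have e2 : ENNReal.ofReal (2 * k₁ * (Mu * Mu))
          = ENNReal.ofReal (2 * k₁) * (ENNReal.ofReal Mu * ENNReal.ofReal Mu) := by
        rw [ENNReal.ofReal_mul (by linarith), ENNReal.ofReal_mul hMu0]
      have e3 : ENNReal.ofReal (k₁ * (N * (Mu * Mu)))
          = ENNReal.ofReal k₁ *
              (ENNReal.ofReal N * (ENNReal.ofReal Mu * ENNReal.ofReal Mu)) := by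
        rw [ENNReal.ofReal_mul hk₁, ENNReal.ofReal_mul hN0, ENNReal.ofReal_mul hMu0]
      have e4 : ENNReal.ofReal (k₁ * (Mv * Mv))
          = ENNReal.ofReal k₁ * (ENNReal.ofReal Mv * ENNReal.ofReal Mv) := by
        rw [ENNReal.ofReal_mul hk₁, ENNReal.ofReal_mul hMv0]
      have e5 : ENNReal.ofReal (2 * k₁ * (Mv * Mv))
          = ENNReal.ofReal (2 * k₁) * (ENNReal.ofReal Mv * ENNReal.ofReal Mv) := by
        rw [ENNReal.ofReal_mul (by linarith), ENNReal.ofReal_mul hMv0]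
      have e6 : ENNReal.ofReal (k₁ * (N * (Mv * Mv)))
          = ENNReal.ofReal k₁ *
              (ENNReal.ofReal N * (ENNReal.ofReal Mv * ENNReal.ofReal Mv)) := by
        rw [ENNReal.ofReal_mul hk₁, ENNReal.ofReal_mul hN0, ENNReal.ofReal_mul hMv0]
      rw [e1, e2, e3, e4, e5, e6]
      rw [hΛu] at hH1i hH2i hH3i
      rw [hΛv] at hH4i hH5i hH6i
      exact add_le_add (add_le_add (add_le_add (add_le_add (add_le_add
        hH1i hH2i) hH3i) hH4i) hH5i) hH6i
    refine le_trans (mul_le_mul_right htot _) ?_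
    have hA1 : 0 ≤ k₁ * (Mu * Mu) := mul_nonneg hk₁ (mul_self_nonneg Mu)
    have hA2 : 0 ≤ 2 * k₁ * (Mu * Mu) := mul_nonneg (by linarith) (mul_self_nonneg Mu)
    have hA3 : 0 ≤ k₁ * (N * (Mu * Mu)) :=
      mul_nonneg hk₁ (mul_nonneg hN0 (mul_self_nonneg Mu))
    have hA4 : 0 ≤ k₁ * (Mv * Mv) := mul_nonneg hk₁ (mul_self_nonneg Mv)
    have hA5 : 0 ≤ 2 * k₁ * (Mv * Mv) := mul_nonneg (by linarith) (mul_self_nonneg Mv)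
    have hA6 : 0 ≤ k₁ * (N * (Mv * Mv)) :=
      mul_nonneg hk₁ (mul_nonneg hN0 (mul_self_nonneg Mv))
    rw [← ENNReal.ofReal_add hA1 hA2, ← ENNReal.ofReal_add (by linarith) hA3,
      ← ENNReal.ofReal_add (by linarith) hA4, ← ENNReal.ofReal_add (by linarith) hA5,
      ← ENNReal.ofReal_add (by linarith) hA6, ← ENNReal.ofReal_mul hCψ0]
    refine ENNReal.ofReal_le_ofReal ?_
    have h1 : Mu * Mu ≤ GT * GT := mul_le_mul hMuGT hMuGT hMu0 hGT0
    have kc : 0 ≤ k₁ * Cψ := mul_nonneg hk₁ hCψ0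
    have key2 : k₁ * Cψ * ((3 + N) * (Mu * Mu)) ≤ k₁ * Cψ * ((3 + N) * (GT * GT)) :=
      mul_le_mul_of_nonneg_left (mul_le_mul_of_nonneg_left h1 (by linarith)) kc
    have key3 : k₁ * Cψ * ((3 + N) * (Mv * Mv)) ≤ k₁ * Cψ * ((5 + N) * (Mv * Mv)) :=
      mul_le_mul_of_nonneg_left
        (mul_le_mul_of_nonneg_right (by linarith) (mul_self_nonneg Mv)) kc
    nlinarith [key2, key3]
  calc |∫ z in Ioo (0:ℝ) a, ψ z * D z|
      = ‖∫ z in Ioo (0:ℝ) a, ψ z * D z‖ := (Real.norm_eq_abs _).symm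
    _ ≤ (∫⁻ z in Ioo (0:ℝ) a, ENNReal.ofReal ‖ψ z * D z‖).toReal :=
        norm_integral_le_lintegral_norm _
    _ ≤ k₁ * Cψ * (GT ^ 2 * (3 + N) + Mv ^ 2 * (5 + N)) :=
        ENNReal.toReal_le_of_le_ofReal hRHS0 hmain
end
end
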